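/- arXiv:2303.04386 — 6 statements merged into one kernel-verified Lean document; each statement's English description precedes it below -/
import Mathlib

section
/- For any probability vectors $x, y$ in the relative interior of the simplex $\Delta_n$ and any nonnegative vector $g \in \mathbb{R}^n_+$, one has $\langle g, x - y\rangle - \sum_{i=1}^n y_i \log(y_i/x_i) \le \sum_{i=1}^n x_i g_i^2 / 2$. -/
open Finset

private lemma exp_neg_le_quadratic {t : ℝ} (ht : 0 ≤ t) :
    Real.exp (-t) ≤ 1 - t + t ^ 2 / 2 := by
  have h1 : 1 + t + t ^ 2 / 2 ≤ Real.exp t := Real.quadratic_le_exp_of_nonneg ht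
  have hmul : Real.exp (-t) * Real.exp t = 1 := by
    rw [← Real.exp_add]; simp
  have hpos : (0:ℝ) < Real.exp (-t) := Real.exp_pos _
  nlinarith [sq_nonneg t, sq_nonneg (t * t), mul_le_mul_of_nonneg_left h1 hpos.le]

/-- For probability vectors `x, y` in the relative interior of the simplex and
a nonnegative vector `g`, `⟨g, x - y⟩ - KL(y‖x) ≤ ∑ x i * g i ^ 2 / 2`. -/
theorem weighted_kl_control (n : ℕ) (x y g : Fin n → ℝ)
    (hx : ∀ i, 0 < x i) (hxs : ∑ i, x i = 1)
    (hy : ∀ i, 0 < y i) (hys : ∑ i, y i = 1)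
    (hg : ∀ i, 0 ≤ g i) :
    (∑ i, g i * (x i - y i)) - ∑ i, y i * Real.log (y i / x i)
      ≤ ∑ i, x i * g i ^ 2 / 2 := by
  have hn : Nonempty (Fin n) := by
    rcases Nat.eq_zero_or_pos n with h | h
    · subst h; exact absurd hxs (by simp)
    · exact ⟨⟨0, h⟩⟩
  set Z : ℝ := ∑ i, x i * Real.exp (-g i) with hZdef
  have hZpos : 0 < Z :=
    Finset.sum_pos (fun i _ => mul_pos (hx i) (Real.exp_pos _)) univ_nonempty
  -- Step 1: Gibbs inequality (per coordinate)
  have hstep : ∀ i, y i * (-(Real.log (y i / x i)) - g i - Real.log Z)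
      ≤ x i * Real.exp (-g i) / Z - y i := by
    intro i
    have hq : 0 < x i * Real.exp (-g i) / Z :=
      div_pos (mul_pos (hx i) (Real.exp_pos _)) hZpos
    have hl : Real.log (x i * Real.exp (-g i) / Z / y i)
        ≤ x i * Real.exp (-g i) / Z / y i - 1 :=
      Real.log_le_sub_one_of_pos (div_pos hq (hy i))
    have hlog : Real.log (x i * Real.exp (-g i) / Z / y i)
        = -(Real.log (y i / x i)) - g i - Real.log Z := by
      rw [Real.log_div (ne_of_gt hq) (ne_of_gt (hy i)),
          Real.log_div (mul_pos (hx i) (Real.exp_pos _)).ne' (ne_of_gt hZpos),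
          Real.log_mul (ne_of_gt (hx i)) (by positivity), Real.log_exp,
          Real.log_div (ne_of_gt (hy i)) (ne_of_gt (hx i))]
      ring
    rw [hlog] at hl
    have h2 := mul_le_mul_of_nonneg_left hl (hy i).le
    refine h2.trans_eq ?_
    have hy' := (hy i).ne'
    field_simp
  have hsum1 : ∑ i, y i * (-(Real.log (y i / x i)) - g i - Real.log Z)
      ≤ ∑ i, (x i * Real.exp (-g i) / Z - y i) :=
    Finset.sum_le_sum (fun i _ => hstep i)
  have hRHS : ∑ i, (x i * Real.exp (-g i) / Z - y i) = 0 := by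
    rw [Finset.sum_sub_distrib, ← Finset.sum_div, ← hZdef, div_self (ne_of_gt hZpos), hys]
    ring
  have hLHS : ∑ i, y i * (-(Real.log (y i / x i)) - g i - Real.log Z)
      = -(∑ i, y i * Real.log (y i / x i)) - (∑ i, y i * g i) - Real.log Z := by
    simp only [mul_sub, mul_neg]
    rw [Finset.sum_sub_distrib, Finset.sum_sub_distrib, ← Finset.sum_neg_distrib,
        ← Finset.sum_mul, hys, one_mul]
  rw [hRHS, hLHS] at hsum1
  -- hsum1 : -A - B - log Z ≤ 0
  -- Step 2: log Z ≤ -⟨x,g⟩ + ∑ x g²/2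
  have hZle : Z ≤ 1 - (∑ i, x i * g i) + ∑ i, x i * g i ^ 2 / 2 := by
    have h1 : Z ≤ ∑ i, x i * (1 - g i + g i ^ 2 / 2) :=
      Finset.sum_le_sum fun i _ =>
        mul_le_mul_of_nonneg_left (exp_neg_le_quadratic (hg i)) (hx i).le
    refine h1.trans_eq ?_
    rw [Finset.sum_congr rfl (fun i _ =>
      (by ring : x i * (1 - g i + g i ^ 2 / 2) = x i - x i * g i + x i * g i ^ 2 / 2)),
      Finset.sum_add_distrib, Finset.sum_sub_distrib, hxs]
  have hlogZ : Real.log Z ≤ Z - 1 := Real.log_le_sub_one_of_pos hZpos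
  -- Combine
  have hsplit : ∑ i, g i * (x i - y i) = (∑ i, x i * g i) - ∑ i, y i * g i := by
    rw [← Finset.sum_sub_distrib]
    exact Finset.sum_congr rfl fun i _ => by ring
  rw [hsplit]
  linarith
end

section
/- Let $\{Z_t\}_{t \ge 0}$ be a time-homogeneous Markov chain on a finite state space $\mathcal{Z}$ with stationary distribution $\sigma$, satisfying geometric mixing: $\sum_{z' \in \mathcal{Z}} |\mathbb{P}(Z_t = z' \mid Z_0) - \sigma(z')| \le C \rho^t$ for all $t$ and all initial states, for constants $C > 0$ and $\rho \in (0,1)$. Fix $z \in \mathcal{Z}$ with $\sigma(z) > 0$, let $t_{\mathrm{mix}} = \lceil \log_\rho(\sigma(z)/(2C)) \rceil$, and for $n \ge 1$ let $\tau$ be the first time $t \le n-1$ with $Z_t = z$ (set $\tau = n$ if no such $t$ exists). Then for any initial state $Z_0 \ne z$ and any $1 \le i \le n-1$, $\mathbb{P}(\tau = i \mid Z_0) \le (1 - \sigma(z)/2)^{\lceil i / t_{\mathrm{mix}} \rceil - 1}$. -/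
open Finset

/-- `t`-step transition probabilities of a finite Markov chain with kernel `K`. -/
noncomputable def kpow {Z : Type*} [Fintype Z] [DecidableEq Z]
    (K : Z → Z → ℝ) : ℕ → Z → Z → ℝ
  | 0, z0, z' => if z0 = z' then 1 else 0
  | t + 1, z0, z' => ∑ u, K z0 u * kpow K t u z'

/-- `hitProb K z i z0` is the probability that the chain started at `z0` visits `z`
for the first time at time `i`. -/
noncomputable def hitProb {Z : Type*} [Fintype Z] [DecidableEq Z]
    (K : Z → Z → ℝ) (z : Z) : ℕ → Z → ℝ
  | 0, z0 => if z0 = z then 1 else 0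
  | i + 1, z0 => if z0 = z then 0 else ∑ u, K z0 u * hitProb K z i u

/-- Probability of avoiding `z` during times `1,…,i`. -/
noncomputable def avoid {Z : Type*} [Fintype Z] [DecidableEq Z]
    (K : Z → Z → ℝ) (z : Z) : ℕ → Z → ℝ
  | 0, _ => 1
  | i + 1, z0 => ∑ u, K z0 u * (if u = z then 0 else avoid K z i u)

section aux

variable {Z : Type*} [Fintype Z] [DecidableEq Z]
    (K : Z → Z → ℝ) (z : Z)
    (hK0 : ∀ z z', 0 ≤ K z z') (hK1 : ∀ z, ∑ z', K z z' = 1)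

include hK0 in
lemma avoid_nonneg : ∀ (i : ℕ) (z0 : Z), 0 ≤ avoid K z i z0 := by
  intro i
  induction i with
  | zero => intro z0; simp [avoid]
  | succ i ih =>
    intro z0
    rw [avoid]
    apply Finset.sum_nonneg
    intro u _
    apply mul_nonneg (hK0 _ _)
    split <;> [rfl; exact ih u]

include hK0 hK1 in
lemma avoid_le_one : ∀ (i : ℕ) (z0 : Z), avoid K z i z0 ≤ 1 := by
  intro i
  induction i with
  | zero => intro z0; simp [avoid]
  | succ i ih =>
    intro z0
    rw [avoid]
    calc ∑ u, K z0 u * (if u = z then 0 else avoid K z i u)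
        ≤ ∑ u, K z0 u * 1 := by
          apply Finset.sum_le_sum
          intro u _
          apply mul_le_mul_of_nonneg_left _ (hK0 _ _)
          split
          · norm_num
          · exact ih u
      _ = 1 := by simp [hK1]

include hK0 hK1 in
lemma avoid_succ_le : ∀ (i : ℕ) (z0 : Z), avoid K z (i + 1) z0 ≤ avoid K z i z0 := by
  intro i
  induction i with
  | zero =>
    intro z0
    rw [avoid]
    calc ∑ u, K z0 u * (if u = z then 0 else avoid K z 0 u)
        ≤ ∑ u, K z0 u * 1 := by
          apply Finset.sum_le_sum
          intro u _
          apply mul_le_mul_of_nonneg_left _ (hK0 _ _)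
          split
          · norm_num
          · exact avoid_le_one K z hK0 hK1 0 u
      _ = 1 := by simp [hK1]
      _ = avoid K z 0 z0 := by simp [avoid]
  | succ i ih =>
    intro z0
    rw [show i + 1 + 1 = i + 2 from rfl]
    rw [avoid, avoid]
    apply Finset.sum_le_sum
    intro u _
    apply mul_le_mul_of_nonneg_left _ (hK0 _ _)
    split
    · rfl
    · exact ih u

include hK0 hK1 in
lemma avoid_mono {i j : ℕ} (hij : i ≤ j) (z0 : Z) :
    avoid K z j z0 ≤ avoid K z i z0 := by
  induction j with
  | zero => simp_all
  | succ j ih =>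
    rcases Nat.lt_or_ge i (j + 1) with h | h
    · exact le_trans (avoid_succ_le K z hK0 hK1 j z0) (ih (Nat.lt_succ_iff.mp h))
    · have : i = j + 1 := le_antisymm hij h
      subst this; rfl

include hK0 in
lemma kpow_nonneg : ∀ (t : ℕ) (z0 z' : Z), 0 ≤ kpow K t z0 z' := by
  intro t
  induction t with
  | zero => intro z0 z'; rw [kpow]; split <;> norm_num
  | succ t ih =>
    intro z0 z'
    rw [kpow]
    exact Finset.sum_nonneg fun u _ => mul_nonneg (hK0 _ _) (ih u z')

include hK1 in
lemma kpow_sum : ∀ (t : ℕ) (z0 : Z), ∑ z', kpow K t z0 z' = 1 := by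
  intro t
  induction t with
  | zero => intro z0; simp [kpow]
  | succ t ih =>
    intro z0
    simp only [kpow]
    rw [Finset.sum_comm]
    simp [← Finset.mul_sum, ih, hK1]

include hK0 hK1 in
lemma kpow_le_one : ∀ (t : ℕ) (z0 z' : Z), kpow K t z0 z' ≤ 1 := by
  intro t z0 z'
  calc kpow K t z0 z' ≤ ∑ u, kpow K t z0 u :=
        Finset.single_le_sum (fun u _ => kpow_nonneg K hK0 t z0 u) (Finset.mem_univ z')
    _ = 1 := kpow_sum K hK1 t z0

include hK0 hK1 in
lemma avoid_add_kpow_le : ∀ (t : ℕ), 1 ≤ t → ∀ (z0 : Z),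
    avoid K z t z0 + kpow K t z0 z ≤ 1 := by
  intro t
  induction t with
  | zero => omega
  | succ t ih =>
    intro _ z0
    rcases Nat.eq_zero_or_pos t with ht | ht
    · subst ht
      rw [avoid, kpow]
      rw [← Finset.sum_add_distrib]
      calc (∑ u, (K z0 u * (if u = z then 0 else avoid K z 0 u) + K z0 u * kpow K 0 u z))
          ≤ ∑ u, K z0 u := by
            apply Finset.sum_le_sum
            intro u _
            rw [← mul_add]
            apply mul_le_of_le_one_right (hK0 _ _)
            rw [avoid, kpow]
            by_cases hu : u = z <;> simp [hu]
        _ = 1 := hK1 z0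
    · rw [avoid, kpow, ← Finset.sum_add_distrib]
      calc (∑ u, (K z0 u * (if u = z then 0 else avoid K z t u) + K z0 u * kpow K t u z))
          ≤ ∑ u, K z0 u := by
            apply Finset.sum_le_sum
            intro u _
            rw [← mul_add]
            apply mul_le_of_le_one_right (hK0 _ _)
            by_cases hu : u = z
            · subst hu
              simpa using kpow_le_one K hK0 hK1 t u u
            · rw [if_neg hu]
              exact ih ht u
        _ = 1 := hK1 z0

include hK0 hK1 in
lemma hitProb_le_avoid : ∀ (i : ℕ) (z0 : Z),
    hitProb K z (i + 1) z0 ≤ if z0 = z then 0 else avoid K z i z0 := by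
  intro i
  induction i with
  | zero =>
    intro z0
    rw [hitProb]
    by_cases h : z0 = z
    · simp [h]
    · rw [if_neg h, if_neg h]
      calc (∑ u, K z0 u * hitProb K z 0 u) ≤ ∑ u, K z0 u := by
            apply Finset.sum_le_sum
            intro u _
            nth_rewrite 2 [show K z0 u = K z0 u * 1 by ring]
            apply mul_le_mul_of_nonneg_left _ (hK0 _ _)
            rw [hitProb]; split <;> norm_num
        _ = 1 := hK1 z0
        _ = avoid K z 0 z0 := by simp [avoid]
  | succ i ih =>
    intro z0
    rw [show i + 1 + 1 = i + 2 from rfl, hitProb]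
    by_cases h : z0 = z
    · simp [h]
    · rw [if_neg h, if_neg h, avoid]
      apply Finset.sum_le_sum
      intro u _
      exact mul_le_mul_of_nonneg_left (ih u) (hK0 _ _)

include hK0 in
lemma avoid_block {B : ℝ} (hB : 0 ≤ B) (j : ℕ) (hBj : ∀ u, avoid K z j u ≤ B) :
    ∀ (t : ℕ) (z0 : Z), avoid K z (t + j) z0 ≤ avoid K z t z0 * B := by
  intro t
  induction t with
  | zero => intro z0; simpa [avoid] using hBj z0
  | succ t ih =>
    intro z0
    rw [show t + 1 + j = (t + j) + 1 from by omega, avoid]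
    rw [avoid, Finset.sum_mul]
    apply Finset.sum_le_sum
    intro u _
    rw [mul_assoc]
    apply mul_le_mul_of_nonneg_left _ (hK0 _ _)
    by_cases hu : u = z
    · simp [hu]
    · rw [if_neg hu, if_neg hu]
      exact ih u

end aux

/-- hitting-time tail bound for a geometrically mixing finite Markov chain:
for a target state `z` with `σ z > 0`, any start `z0 ≠ z` and `1 ≤ i ≤ n - 1`,
`ℙ(τ = i | Z_0 = z0) ≤ (1 - σ z / 2) ^ (⌈i / t_mix⌉ - 1)`. -/
theorem hitting_time_tail_bound {Z : Type*} [Fintype Z] [DecidableEq Z]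
    (K : Z → Z → ℝ) (σ : Z → ℝ) (C ρ : ℝ)
    (hK0 : ∀ z z', 0 ≤ K z z') (hK1 : ∀ z, ∑ z', K z z' = 1)
    (hσ0 : ∀ z, 0 ≤ σ z) (hσ1 : ∑ z, σ z = 1)
    (hstat : ∀ z', ∑ z, σ z * K z z' = σ z')
    (hC : 0 < C) (hρ0 : 0 < ρ) (hρ1 : ρ < 1)
    (hmix : ∀ (t : ℕ) (z0 : Z), ∑ z', |kpow K t z0 z' - σ z'| ≤ C * ρ ^ t)
    (z : Z) (hz : 0 < σ z)
    (tmix : ℕ) (htmix : tmix = ⌈Real.log (σ z / (2 * C)) / Real.log ρ⌉₊)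
    (n : ℕ) (z0 : Z) (hz0 : z0 ≠ z)
    (i : ℕ) (hi1 : 1 ≤ i) (hin : i ≤ n - 1) :
    hitProb K z i z0 ≤ (1 - σ z / 2) ^ (⌈(i : ℝ) / (tmix : ℝ)⌉₊ - 1) := by
  have hσz1 : σ z ≤ 1 := by
    calc σ z ≤ ∑ u, σ u := Finset.single_le_sum (fun u _ => hσ0 u) (Finset.mem_univ z)
      _ = 1 := hσ1
  have hhalf0 : 0 ≤ 1 - σ z / 2 := by linarith
  -- hitProb i z0 ≤ avoid (i-1) z0
  obtain ⟨i', rfl⟩ : ∃ i', i = i' + 1 := ⟨i - 1, by omega⟩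
  have h1 : hitProb K z (i' + 1) z0 ≤ avoid K z i' z0 := by
    have := hitProb_le_avoid K z hK0 hK1 i' z0
    rwa [if_neg hz0] at this
  rcases Nat.eq_zero_or_pos tmix with htm0 | htm1
  · -- tmix = 0 : bound is 1
    rw [htm0]
    simp only [Nat.cast_zero, div_zero, Nat.ceil_zero, Nat.zero_sub, pow_zero]
    calc hitProb K z (i' + 1) z0 ≤ avoid K z i' z0 := h1
      _ ≤ 1 := avoid_le_one K z hK0 hK1 i' z0
  · -- main case
    -- the key mixing bound: σ z / 2 ≤ kpow tmix u z
    have hCρ : C * ρ ^ tmix ≤ σ z / 2 := by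
      rcases le_or_gt 1 (σ z / (2 * C)) with ha | ha
      · have hC2 : C ≤ σ z / 2 := by
          rw [le_div_iff₀ (by positivity)] at ha
          linarith
        calc C * ρ ^ tmix ≤ C * 1 := by
              apply mul_le_mul_of_nonneg_left _ hC.le
              exact pow_le_one₀ hρ0.le hρ1.le
          _ = C := mul_one C
          _ ≤ σ z / 2 := hC2
      · have ha0 : 0 < σ z / (2 * C) := by positivity
        have hla : Real.log (σ z / (2 * C)) < 0 := Real.log_neg ha0 ha
        have hlρ : Real.log ρ < 0 := Real.log_neg hρ0 hρ1
        have hratio : Real.log (σ z / (2 * C)) / Real.log ρ ≤ (tmix : ℝ) := by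
          rw [htmix]
          exact Nat.le_ceil _
        have hmul : (tmix : ℝ) * Real.log ρ ≤ Real.log (σ z / (2 * C)) := by
          rw [div_le_iff_of_neg hlρ] at hratio
          linarith [hratio]
        have : ρ ^ tmix ≤ σ z / (2 * C) := by
          have := Real.exp_le_exp.mpr hmul
          rwa [Real.exp_log ha0, ← Real.log_pow, Real.exp_log (by positivity)] at this
        calc C * ρ ^ tmix ≤ C * (σ z / (2 * C)) :=
              mul_le_mul_of_nonneg_left this hC.le
          _ = σ z / 2 := by field_simp
    have hkp : ∀ u : Z, σ z / 2 ≤ kpow K tmix u z := by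
      intro u
      have h2 : |kpow K tmix u z - σ z| ≤ C * ρ ^ tmix := by
        calc |kpow K tmix u z - σ z|
            ≤ ∑ z', |kpow K tmix u z' - σ z'| :=
              Finset.single_le_sum (f := fun z' => |kpow K tmix u z' - σ z'|)
                (fun z' _ => abs_nonneg _) (Finset.mem_univ z)
          _ ≤ C * ρ ^ tmix := hmix tmix u
      have := abs_le.mp (le_trans h2 hCρ)
      linarith [this.1]
    have havoid_tmix : ∀ u : Z, avoid K z tmix u ≤ 1 - σ z / 2 := by
      intro u
      have := avoid_add_kpow_le K z hK0 hK1 tmix htm1 u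
      linarith [hkp u]
    -- avoid (m * tmix) z0 ≤ (1 - σ z / 2) ^ m
    have hblock : ∀ (m : ℕ) (u : Z), avoid K z (m * tmix) u ≤ (1 - σ z / 2) ^ m := by
      intro m
      induction m with
      | zero => intro u; simp [avoid]
      | succ m ih =>
        intro u
        have : avoid K z (tmix + m * tmix) u ≤ avoid K z tmix u * (1 - σ z / 2) ^ m := by
          exact avoid_block K z hK0 (pow_nonneg hhalf0 m) (m * tmix) ih tmix u
        calc avoid K z ((m + 1) * tmix) u = avoid K z (tmix + m * tmix) u := by
              ring_nf
          _ ≤ avoid K z tmix u * (1 - σ z / 2) ^ m := this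
          _ ≤ (1 - σ z / 2) * (1 - σ z / 2) ^ m :=
              mul_le_mul_of_nonneg_right (havoid_tmix u) (pow_nonneg hhalf0 m)
          _ = (1 - σ z / 2) ^ (m + 1) := (pow_succ' _ _).symm
    set c := ⌈((i' + 1 : ℕ) : ℝ) / (tmix : ℝ)⌉₊ with hc
    have hc1 : 1 ≤ c := by
      rw [hc]
      apply Nat.one_le_ceil_iff.mpr
      positivity
    have hkey : (c - 1) * tmix ≤ i' := by
      have hlt : ((c - 1 : ℕ) : ℝ) < ((i' + 1 : ℕ) : ℝ) / (tmix : ℝ) := by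
        apply Nat.lt_ceil.mp
        omega
      rw [lt_div_iff₀ (show (0:ℝ) < (tmix:ℝ) by exact_mod_cast htm1)] at hlt
      have h2 : (c - 1) * tmix < i' + 1 := by exact_mod_cast hlt
      omega
    calc hitProb K z (i' + 1) z0 ≤ avoid K z i' z0 := h1
      _ ≤ avoid K z ((c - 1) * tmix) z0 := avoid_mono K z hK0 hK1 hkey z0
      _ ≤ (1 - σ z / 2) ^ (c - 1) := hblock (c - 1) z0
end

section
/- For $p \in (0,1)$, the negative Tsallis entropy $w(x) = -\sum_{i=1}^n x_i^p$ on the simplex satisfies: its Bregman divergence obeys $D(x, y) \ge \frac{p(1-p)}{n}\|x - y\|_1^2$ for all $x, y \in \mathrm{ReInt}(\Delta_n)$. -/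
open Finset


private noncomputable def Flog (t : ℝ) : ℝ :=
  Real.log t - (5*t^2 - 4*t - 1) / (2*t^2 + 4*t)

private lemma hasDerivAt_Flog {t : ℝ} (ht : 0 < t) :
    HasDerivAt Flog ((t-1)^3 / (t^2 * (t+2)^2)) t := by
  have hd : (2*t^2 + 4*t) ≠ 0 := by nlinarith
  have h1 : HasDerivAt (fun s : ℝ => 5*s^2 - 4*s - 1) (10*t - 4) t := by
    have := (((hasDerivAt_pow 2 t).const_mul 5).sub ((hasDerivAt_id t).const_mul 4)).sub_const 1
    refine this.congr_deriv ?_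
    simp; ring
  have h2 : HasDerivAt (fun s : ℝ => 2*s^2 + 4*s) (4*t + 4) t := by
    have := ((hasDerivAt_pow 2 t).const_mul 2).add ((hasDerivAt_id t).const_mul 4)
    refine this.congr_deriv ?_
    simp; ring
  have hq := h1.div h2 hd
  have hl : HasDerivAt Real.log t⁻¹ t := Real.hasDerivAt_log ht.ne'
  have := hl.sub hq
  refine this.congr_deriv ?_
  have ht2 : t + 2 ≠ 0 := by positivity
  field_simp
  ring

private lemma Flog_nonneg {t : ℝ} (ht : 0 < t) : 0 ≤ Flog t := by
  have hF1 : Flog 1 = 0 := by norm_num [Flog]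
  have hdiff : ∀ s ∈ Set.Ici (0:ℝ) \ {0}, DifferentiableAt ℝ Flog s := by
    intro s hs
    have hs0 : 0 < s := lt_of_le_of_ne hs.1 (Ne.symm hs.2)
    exact (hasDerivAt_Flog hs0).differentiableAt
  rcases le_total 1 t with h1t | ht1
  · -- monotone on [1, t]
    have hmono : MonotoneOn Flog (Set.Icc 1 t) := by
      apply monotoneOn_of_deriv_nonneg (convex_Icc 1 t)
      · intro s hs
        exact ((hasDerivAt_Flog (lt_of_lt_of_le one_pos hs.1)).differentiableAt).continuousAt.continuousWithinAt
      · intro s hs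
        rw [interior_Icc] at hs
        exact ((hasDerivAt_Flog (lt_trans one_pos hs.1)).differentiableAt).differentiableWithinAt
      · intro s hs
        rw [interior_Icc] at hs
        have hs0 : 0 < s := lt_trans one_pos hs.1
        rw [(hasDerivAt_Flog hs0).deriv]
        have h1 : (0:ℝ) ≤ (s-1)^3 := pow_nonneg (by linarith [hs.1]) 3
        have h2 : (0:ℝ) < s^2 * (s+2)^2 := by positivity
        exact div_nonneg h1 h2.le
    have := hmono (Set.left_mem_Icc.mpr h1t) (Set.right_mem_Icc.mpr h1t) h1t
    linarith [hF1 ▸ this]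
  · -- antitone on [t, 1]
    have hanti : AntitoneOn Flog (Set.Icc t 1) := by
      apply antitoneOn_of_deriv_nonpos (convex_Icc t 1)
      · intro s hs
        exact ((hasDerivAt_Flog (lt_of_lt_of_le ht hs.1)).differentiableAt).continuousAt.continuousWithinAt
      · intro s hs
        rw [interior_Icc] at hs
        exact ((hasDerivAt_Flog (lt_of_lt_of_le ht hs.1.le)).differentiableAt).differentiableWithinAt
      · intro s hs
        rw [interior_Icc] at hs
        have hs0 : 0 < s := lt_of_lt_of_le ht hs.1.le
        rw [(hasDerivAt_Flog hs0).deriv]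
        have h1 : (s-1)^3 ≤ 0 := Odd.pow_nonpos ⟨1, by norm_num⟩ (by linarith [hs.2])
        have h2 : (0:ℝ) < s^2 * (s+2)^2 := by positivity
        exact div_nonpos_of_nonpos_of_nonneg h1 h2.le
    have := hanti (Set.left_mem_Icc.mpr ht1) (Set.right_mem_Icc.mpr ht1) ht1
    linarith [hF1 ▸ this]

private lemma key_log {t : ℝ} (ht : 0 < t) :
    (5*t^2 - 4*t - 1) / (2*t^2 + 4*t) ≤ Real.log t := by
  have := Flog_nonneg ht
  unfold Flog at this
  linarith


/-- Pinsker-type pointwise bound. -/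
private lemma pointwise_pinsker {a b : ℝ} (ha : 0 < a) (hb : 0 < b) :
    3*(a-b)^2 / (2*a + 4*b) ≤ a*Real.log a - a*Real.log b - a + b := by
  set t := a / b with htdef
  have ht : 0 < t := div_pos ha hb
  have hlog : Real.log a - Real.log b = Real.log t := (Real.log_div ha.ne' hb.ne').symm
  have h := key_log ht
  have h2 : a * ((5*t^2 - 4*t - 1) / (2*t^2 + 4*t)) ≤ a * (Real.log a - Real.log b) := by
    rw [hlog]; exact mul_le_mul_of_nonneg_left h ha.le
  have heq : a * ((5*t^2 - 4*t - 1) / (2*t^2 + 4*t)) - a + b = 3*(a-b)^2 / (2*a + 4*b) := by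
    have hb' : b ≠ 0 := hb.ne'
    have h1 : (2*t^2 + 4*t) ≠ 0 := by positivity
    have h3 : (2*a + 4*b) ≠ 0 := by positivity
    rw [htdef] at h1 ⊢
    field_simp at h1 ⊢
    ring
  nlinarith [h2, heq]

/-- monotonicity of `u r = -(r^(p-1)) - (1-p) log r` on `(0,1]`. -/
private lemma mono_u {p : ℝ} (hp0 : 0 < p) (hp1 : p < 1) {s t : ℝ}
    (hs : 0 < s) (hst : s ≤ t) (ht1 : t ≤ 1) :
    (1-p) * (Real.log t - Real.log s) ≤ s ^ (p-1) - t ^ (p-1) := by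
  set u : ℝ → ℝ := fun r => -(r ^ (p-1)) - (1-p) * Real.log r with hu
  have hderiv : ∀ r : ℝ, 0 < r →
      HasDerivAt u ((1-p) * (r ^ (p-2) - r⁻¹)) r := by
    intro r hr
    have h1 : HasDerivAt (fun r : ℝ => r ^ (p-1)) ((p-1) * r ^ (p-1-1)) r :=
      Real.hasDerivAt_rpow_const (Or.inl hr.ne')
    have h2 : HasDerivAt Real.log r⁻¹ r := Real.hasDerivAt_log hr.ne'
    have := (h1.neg).sub ((h2.const_mul (1-p)))
    refine this.congr_deriv ?_
    ring_nf
  have hmono : MonotoneOn u (Set.Icc s t) := by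
    apply monotoneOn_of_deriv_nonneg (convex_Icc s t)
    · intro r hr
      exact ((hderiv r (lt_of_lt_of_le hs hr.1)).differentiableAt).continuousAt.continuousWithinAt
    · intro r hr
      rw [interior_Icc] at hr
      exact ((hderiv r (lt_trans hs hr.1)).differentiableAt).differentiableWithinAt
    · intro r hr
      rw [interior_Icc] at hr
      have hr0 : 0 < r := lt_trans hs hr.1
      have hr1 : r ≤ 1 := le_of_lt (lt_of_lt_of_le hr.2 ht1)
      rw [(hderiv r hr0).deriv]
      have hle : r ^ (-1:ℝ) ≤ r ^ (p-2) :=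
        Real.rpow_le_rpow_of_exponent_ge hr0 hr1 (by linarith)
      rw [Real.rpow_neg_one] at hle
      have : 0 ≤ 1 - p := by linarith
      nlinarith [hle]
  have := hmono (Set.left_mem_Icc.mpr hst) (Set.right_mem_Icc.mpr hst) hst
  simp only [hu] at this
  linarith


private lemma bregman_ge_kl {p : ℝ} (hp0 : 0 < p) (hp1 : p < 1) {a b : ℝ}
    (ha : 0 < a) (ha1 : a ≤ 1) (hb : 0 < b) (hb1 : b ≤ 1) :
    p * (1-p) * (a*Real.log a - a*Real.log b - a + b)
      ≤ b ^ p - a ^ p + p * (b ^ (p-1) * (a - b)) := by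
  set G : ℝ → ℝ := fun s =>
    b ^ p - s ^ p + p * (b ^ (p-1) * (s - b))
      - p * (1-p) * (s*Real.log s - s*Real.log b - s + b) with hG
  have hGb : G b = 0 := by simp [hG]
  have hderiv : ∀ s : ℝ, 0 < s →
      HasDerivAt G (p * ((b ^ (p-1) - s ^ (p-1)) - (1-p) * (Real.log s - Real.log b))) s := by
    intro s hs
    have h1 : HasDerivAt (fun r : ℝ => r ^ p) (p * s ^ (p-1)) s := by
      have := Real.hasDerivAt_rpow_const (x := s) (p := p) (Or.inl hs.ne')
      convert this using 2
    have h2 : HasDerivAt (fun r : ℝ => r * Real.log r) (Real.log s + 1) s := by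
      have := (hasDerivAt_id s).mul (Real.hasDerivAt_log hs.ne')
      refine this.congr_deriv ?_
      field_simp
      simp only [id_eq]; ring
    have h3 : HasDerivAt (fun r : ℝ => b ^ p - r ^ p + p * (b ^ (p-1) * (r - b)))
        (-(p * s ^ (p-1)) + p * (b ^ (p-1) * 1)) s := by
      exact (h1.neg.const_add _).add ((((hasDerivAt_id s).sub_const b).const_mul _).const_mul p)
    have h4 : HasDerivAt (fun r : ℝ => r*Real.log r - r*Real.log b - r + b)
        ((Real.log s + 1) - Real.log b - 1) s := by
      have := (((h2.sub ((hasDerivAt_id s).mul_const (Real.log b))).sub (hasDerivAt_id s))).add_const b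
      refine this.congr_deriv ?_
      ring
    have := h3.sub (h4.const_mul (p * (1-p)))
    refine this.congr_deriv ?_
    ring
  rcases le_total b a with hba | hab
  · -- G monotone on [b, a]
    have hmono : MonotoneOn G (Set.Icc b a) := by
      apply monotoneOn_of_deriv_nonneg (convex_Icc b a)
      · intro r hr
        exact ((hderiv r (lt_of_lt_of_le hb hr.1)).differentiableAt).continuousAt.continuousWithinAt
      · intro r hr
        rw [interior_Icc] at hr
        exact ((hderiv r (lt_trans hb hr.1)).differentiableAt).differentiableWithinAt
      · intro r hr
        rw [interior_Icc] at hr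
        have hr0 : 0 < r := lt_trans hb hr.1
        rw [(hderiv r hr0).deriv]
        have := mono_u hp0 hp1 hb hr.1.le (le_trans hr.2.le ha1)
        nlinarith [this]
    have := hmono (Set.left_mem_Icc.mpr hba) (Set.right_mem_Icc.mpr hba) hba
    rw [hGb] at this
    simp only [hG] at this
    linarith
  · -- G antitone on [a, b]
    have hanti : AntitoneOn G (Set.Icc a b) := by
      apply antitoneOn_of_deriv_nonpos (convex_Icc a b)
      · intro r hr
        exact ((hderiv r (lt_of_lt_of_le ha hr.1)).differentiableAt).continuousAt.continuousWithinAt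
      · intro r hr
        rw [interior_Icc] at hr
        exact ((hderiv r (lt_trans ha hr.1)).differentiableAt).differentiableWithinAt
      · intro r hr
        rw [interior_Icc] at hr
        have hr0 : 0 < r := lt_trans ha hr.1
        rw [(hderiv r hr0).deriv]
        have := mono_u hp0 hp1 hr0 hr.2.le hb1
        nlinarith [this]
    have := hanti (Set.left_mem_Icc.mpr hab) (Set.right_mem_Icc.mpr hab) hab
    rw [hGb] at this
    simp only [hG] at this
    linarith

/-- Bregman divergence of the negative Tsallis entropy `w(x) = -∑ x_i^p`
(whose gradient is `(-p x_i^(p-1))_i`). -/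
noncomputable def tsallisDiv {ι : Type*} [Fintype ι] (p : ℝ) (x y : ι → ℝ) : ℝ :=
  (-∑ i, x i ^ p) + (∑ i, y i ^ p) + p * ∑ i, y i ^ (p - 1) * (x i - y i)

/-- for `p ∈ (0,1)`, the negative Tsallis entropy on the simplex is
`p(1-p)/n`-strongly convex w.r.t. the `ℓ₁` norm:
`D(x,y) ≥ p(1-p)/n * ‖x - y‖₁²` for `x, y` in the relative interior. -/
theorem tsallis_strong_convexity {ι : Type*} [Fintype ι]
    (p : ℝ) (hp0 : 0 < p) (hp1 : p < 1) (x y : ι → ℝ)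
    (hx : ∀ i, 0 < x i) (hxs : ∑ i, x i = 1)
    (hy : ∀ i, 0 < y i) (hys : ∑ i, y i = 1) :
    p * (1 - p) / (Fintype.card ι : ℝ) * (∑ i, |x i - y i|) ^ 2
      ≤ tsallisDiv p x y := by
  classical
  have hpp : (0:ℝ) ≤ p * (1 - p) := by nlinarith
  have hxle : ∀ i, x i ≤ 1 := by
    intro i
    rw [← hxs]
    exact Finset.single_le_sum (fun j _ => (hx j).le) (Finset.mem_univ i)
  have hyle : ∀ i, y i ≤ 1 := by
    intro i
    rw [← hys]
    exact Finset.single_le_sum (fun j _ => (hy j).le) (Finset.mem_univ i)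
  have hsum : tsallisDiv p x y
      = ∑ i, (y i ^ p - x i ^ p + p * (y i ^ (p-1) * (x i - y i))) := by
    unfold tsallisDiv
    rw [Finset.sum_add_distrib, Finset.sum_sub_distrib, Finset.mul_sum]
    ring
  have hptwise : ∀ i, p*(1-p) * (3*(x i - y i)^2/(2*x i + 4*y i))
      ≤ y i ^ p - x i ^ p + p * (y i ^ (p-1) * (x i - y i)) := by
    intro i
    have h1 := bregman_ge_kl hp0 hp1 (hx i) (hxle i) (hy i) (hyle i)
    have h2 := pointwise_pinsker (hx i) (hy i)
    nlinarith [mul_le_mul_of_nonneg_left h2 hpp]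
  have hsum2 : p*(1-p) * ∑ i, 3*(x i - y i)^2/(2*x i + 4*y i) ≤ tsallisDiv p x y := by
    rw [hsum, Finset.mul_sum]
    exact Finset.sum_le_sum (fun i _ => hptwise i)
  have hg : ∀ i ∈ (univ : Finset ι), 0 < 2*x i + 4*y i := by
    intro i _
    have := hx i; have := hy i; linarith
  have hengel := Finset.sq_sum_div_le_sum_sq_div univ (fun i => |x i - y i|) hg
  have hden : ∑ i, (2*x i + 4*y i) = 6 := by
    rw [Finset.sum_add_distrib, ← Finset.mul_sum, ← Finset.mul_sum, hxs, hys]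
    norm_num
  have hterm : ∑ i, |x i - y i|^2 / (2*x i + 4*y i)
      = ∑ i, (x i - y i)^2 / (2*x i + 4*y i) := by
    refine Finset.sum_congr rfl fun i _ => ?_
    rw [sq_abs]
  have hL2 : (∑ i, |x i - y i|)^2 / 6 ≤ ∑ i, (x i - y i)^2/(2*x i + 4*y i) := by
    rw [← hterm, ← hden]
    exact hengel
  have hfin : p*(1-p)/2 * (∑ i, |x i - y i|)^2 ≤ tsallisDiv p x y := by
    have h3 : ∑ i, 3*(x i - y i)^2/(2*x i + 4*y i)
        = 3 * ∑ i, (x i - y i)^2/(2*x i + 4*y i) := by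
      rw [Finset.mul_sum]
      refine Finset.sum_congr rfl fun i _ => ?_
      ring
    rw [h3] at hsum2
    nlinarith [hsum2, hL2, hpp, sq_nonneg (∑ i, |x i - y i|)]
  have hcard0 : 0 < Fintype.card ι := by
    by_contra h
    push_neg at h
    interval_cases h' : Fintype.card ι
    · have : IsEmpty ι := Fintype.card_eq_zero_iff.mp h'
      simp [Finset.univ_eq_empty] at hxs
  rcases Nat.lt_or_ge (Fintype.card ι) 2 with h2 | h2
  · -- card = 1 : x = y, both sides ≥ 0 with L = 0
    have h1 : Fintype.card ι = 1 := by omega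
    obtain ⟨i0, hi0⟩ := Fintype.card_eq_one_iff.mp h1
    have hLz : (∑ i, |x i - y i|) = 0 := by
      have hxi : x i0 = 1 := by
        rw [← hxs]
        rw [Finset.sum_eq_single i0 (fun b _ hb => absurd (hi0 b) hb) (fun h => absurd (Finset.mem_univ i0) h)]
      have hyi : y i0 = 1 := by
        rw [← hys]
        rw [Finset.sum_eq_single i0 (fun b _ hb => absurd (hi0 b) hb) (fun h => absurd (Finset.mem_univ i0) h)]
      rw [Finset.sum_eq_single i0 (fun b _ hb => absurd (hi0 b) hb) (fun h => absurd (Finset.mem_univ i0) h)]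
      rw [hxi, hyi]
      simp
    rw [hLz]
    have h4 : (0:ℝ) ≤ ∑ i, 3*(x i - y i)^2/(2*x i + 4*y i) := by
      apply Finset.sum_nonneg
      intro i hi
      have := hg i hi
      positivity
    simp only [ne_eq, mul_zero, zero_pow, OfNat.ofNat_ne_zero, not_false_eq_true]
    nlinarith [hsum2, h4]
  · -- card ≥ 2
    have hcomp : p * (1 - p) / (Fintype.card ι : ℝ) ≤ p * (1 - p) / 2 := by
      apply div_le_div_of_nonneg_left hpp (by norm_num)
      exact_mod_cast h2
    calc p * (1 - p) / (Fintype.card ι : ℝ) * (∑ i, |x i - y i|) ^ 2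
        ≤ p * (1 - p) / 2 * (∑ i, |x i - y i|) ^ 2 :=
          mul_le_mul_of_nonneg_right hcomp (sq_nonneg _)
      _ ≤ tsallisDiv p x y := hfin
end

section
/- Generalized Azuma inequality for conditionally constrained increments: fix $k \ge 1$, a finite index set $I$, $\delta \in (0,1)$, $b > 0$, and $Z, \varepsilon > 0$ with $Z \ge 2\max\{\sqrt{k}\,\varepsilon,\ 2b\sqrt{\log(k|I|/\delta)}\}$. Let $(\Omega, \mathcal{F}, \mathbb{P})$ carry a filtration $\mathcal{F}_0 = \{\emptyset, \Omega\} \subseteq \mathcal{F}_1 \subseteq \cdots \subseteq \mathcal{F}_k$ and random variables $X_{t,i}$ with $|X_{t,i}| \le b$, $X_{t,i}$ being $\mathcal{F}_{t+1}$-measurable, and such that $\mathbb{E}[X_{t,i} \mid \mathcal{F}_t]\, \mathbf{1}\{\max_{j \in I} Y_{t,j} \le Z\sqrt{t}\} \le \varepsilon$ for all $i \in I$ and $0 \le t \le k-1$, where $Y_{0,i} = 0$ and $Y_{t+1,i} = Y_{t,i} + X_{t,i}$. Then $\mathbb{P}(Y_{t,i} \le Z\sqrt{t} \text{ for all } 0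 \le t \le k \text{ and all } i \in I) \ge 1 - \delta$. -/
open MeasureTheory Finset

lemma aux_sinh_le {y : ℝ} (hy : 0 ≤ y) : Real.sinh y ≤ y * Real.cosh y := by
  have h : MonotoneOn (fun y : ℝ => y * Real.cosh y - Real.sinh y) (Set.Ici 0) := by
    apply monotoneOn_of_deriv_nonneg (convex_Ici 0)
    · exact ((continuous_id.mul Real.continuous_cosh).sub Real.continuous_sinh).continuousOn
    · intro x _
      exact (((hasDerivAt_id x).mul (Real.hasDerivAt_cosh x)).sub
        (Real.hasDerivAt_sinh x)).differentiableAt.differentiableWithinAt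
    · intro x hx
      rw [interior_Ici] at hx
      have hd : HasDerivAt (fun y : ℝ => y * Real.cosh y - Real.sinh y)
          (1 * Real.cosh x + x * Real.sinh x - Real.cosh x) x :=
        ((hasDerivAt_id x).mul (Real.hasDerivAt_cosh x)).sub (Real.hasDerivAt_sinh x)
      rw [hd.deriv]
      have : 0 ≤ Real.sinh x := Real.sinh_nonneg_iff.2 hx.le
      nlinarith [mul_nonneg (le_of_lt hx) this]
  have h0 := h Set.self_mem_Ici hy hy
  simp only [Real.sinh_zero, Real.cosh_zero, zero_mul, sub_zero, zero_sub] at h0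
  linarith

lemma aux_exp_le_cosh {s b x : ℝ} (hb : 0 < b) (hx : |x| ≤ b) :
    Real.exp (s * x) ≤ Real.cosh (s * b) + (x / b) * Real.sinh (s * b) := by
  obtain ⟨hx1, hx2⟩ := abs_le.1 hx
  have h1 : (0:ℝ) ≤ (b - x) / (2 * b) := div_nonneg (by linarith) (by linarith)
  have h2 : (0:ℝ) ≤ (b + x) / (2 * b) := div_nonneg (by linarith) (by linarith)
  have hab : (b - x) / (2 * b) + (b + x) / (2 * b) = 1 := by field_simp; ring
  have hc := convexOn_exp.2 (Set.mem_univ (s * (-b))) (Set.mem_univ (s * b)) h1 h2 hab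
  rw [smul_eq_mul, smul_eq_mul] at hc
  have harg : (b - x) / (2 * b) * (s * (-b)) + (b + x) / (2 * b) * (s * b) = s * x := by
    field_simp; ring
  rw [harg] at hc
  refine hc.trans (le_of_eq ?_)
  rw [Real.cosh_eq, Real.sinh_eq, mul_neg, ← neg_mul, neg_mul_comm]
  have hb0 : b ≠ 0 := hb.ne'
  field_simp
  ring_nf
  have hbi : b * b⁻¹ = 1 := mul_inv_cancel₀ hb0
  linear_combination (-(Real.exp (-(b * s)) * x) + x * Real.exp (b * s) + b * Real.exp (-(b * s))
    + b * Real.exp (b * s)) * hbi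

lemma aux_mgf_bound {s b ε A : ℝ} (hs : 0 ≤ s) (hb : 0 < b) (hε : 0 ≤ ε) (hA : A ≤ ε) :
    Real.cosh (s * b) + (Real.sinh (s * b) / b) * A ≤ Real.exp (s * ε + s ^ 2 * b ^ 2 / 2) := by
  have hsb : 0 ≤ s * b := mul_nonneg hs hb.le
  have hsh : 0 ≤ Real.sinh (s * b) := Real.sinh_nonneg_iff.2 hsb
  have h1 : Real.cosh (s * b) + (Real.sinh (s * b) / b) * A
      ≤ Real.cosh (s * b) + (Real.sinh (s * b) / b) * ε := by
    have : 0 ≤ Real.sinh (s * b) / b := div_nonneg hsh hb.le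
    nlinarith
  have h2 : Real.sinh (s * b) ≤ (s * b) * Real.cosh (s * b) := aux_sinh_le hsb
  have h3 : Real.cosh (s * b) ≤ Real.exp ((s * b) ^ 2 / 2) := Real.cosh_le_exp_half_sq _
  have h4 : Real.cosh (s * b) + (Real.sinh (s * b) / b) * ε
      ≤ (1 + s * ε) * Real.exp ((s * b) ^ 2 / 2) := by
    have hc : 0 < Real.cosh (s * b) := Real.cosh_pos _
    have : (Real.sinh (s * b) / b) * ε ≤ s * ε * Real.cosh (s * b) := by
      rw [div_mul_eq_mul_div, div_le_iff₀ hb]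
      nlinarith
    nlinarith [Real.exp_pos ((s * b) ^ 2 / 2), mul_nonneg (mul_nonneg hs hε) (le_of_lt (lt_of_lt_of_le (Real.cosh_pos _) h3))]
  refine h1.trans (h4.trans ?_)
  have h5 : (1 + s * ε) ≤ Real.exp (s * ε) := by
    have := Real.add_one_le_exp (s * ε); linarith
  calc (1 + s * ε) * Real.exp ((s * b) ^ 2 / 2)
      ≤ Real.exp (s * ε) * Real.exp ((s * b) ^ 2 / 2) := by
        exact mul_le_mul_of_nonneg_right h5 (Real.exp_pos _).le
    _ = Real.exp (s * ε + s ^ 2 * b ^ 2 / 2) := by rw [← Real.exp_add]; ring_nf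

lemma aux_tower {Ω : Type*} {m : MeasurableSpace Ω} (P : Measure Ω) [IsProbabilityMeasure P]
    {mt : MeasurableSpace Ω} (hm : mt ≤ m) {f g : Ω → ℝ} (C D E : ℝ)
    (hf : StronglyMeasurable[mt] f) (hfb : ∀ ω, |f ω| ≤ D) (hf0 : ∀ ω, 0 ≤ f ω)
    (hg : StronglyMeasurable[m] g) (hgb : ∀ ω, |g ω| ≤ E) (hg0 : ∀ ω, 0 ≤ g ω)
    (hgc : P[g|mt] ≤ᵐ[P] fun _ => C) :
    ∫ ω, f ω * g ω ∂P ≤ C * ∫ ω, f ω ∂P := by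
  have hbint : ∀ (h : Ω → ℝ) (B : ℝ), StronglyMeasurable[m] h → (∀ ω, |h ω| ≤ B) →
      Integrable h P := by
    intro h B hh hB
    exact Integrable.mono' (integrable_const B) hh.aestronglyMeasurable
      (Filter.Eventually.of_forall fun ω => by simpa [Real.norm_eq_abs] using hB ω)
  have hgint : Integrable g P := hbint g E hg hgb
  have hfint : Integrable f P := hbint f D (hf.mono hm) hfb
  have hfgint : Integrable (f * g) P :=
    hgint.bdd_mul (hf.mono hm).aestronglyMeasurable (Filter.Eventually.of_forall fun ω => by simpa [Real.norm_eq_abs] using hfb ω)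
  have h1 : ∫ ω, f ω * g ω ∂P = ∫ ω, (P[f * g|mt]) ω ∂P := (integral_condExp hm).symm
  have h2 : P[f * g|mt] =ᵐ[P] f * P[g|mt] :=
    condExp_stronglyMeasurable_mul_of_bound hm hf hgint D
      (Filter.Eventually.of_forall fun ω => by simpa [Real.norm_eq_abs] using hfb ω)
  have h3 : ∫ ω, (P[f * g|mt]) ω ∂P = ∫ ω, f ω * (P[g|mt]) ω ∂P := integral_congr_ae h2
  have hcnn : 0 ≤ᵐ[P] P[g|mt] := condExp_nonneg (Filter.Eventually.of_forall hg0)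
  have h4 : ∫ ω, f ω * (P[g|mt]) ω ∂P ≤ ∫ ω, f ω * C ∂P := by
    refine integral_mono_of_nonneg ?_ (hfint.mul_const C) ?_
    · filter_upwards [hcnn] with ω h using mul_nonneg (hf0 ω) h
    · filter_upwards [hgc] with ω h using mul_le_mul_of_nonneg_left h (hf0 ω)
  have h5 : ∫ ω, f ω * C ∂P = C * ∫ ω, f ω ∂P := by
    rw [integral_mul_const]; ring
  rw [h1, h3, ← h5]; exact h4
lemma aux_condexp_mgf {Ω : Type*} {m : MeasurableSpace Ω} (P : Measure Ω) [IsProbabilityMeasure P]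
    {mt : MeasurableSpace Ω} (hm : mt ≤ m)
    {X' : Ω → ℝ} {s b ε : ℝ} (hs : 0 ≤ s) (hb : 0 < b) (hε : 0 ≤ ε)
    (hX'm : StronglyMeasurable[m] X') (hX'b : ∀ ω, |X' ω| ≤ b)
    (hce : P[X'|mt] ≤ᵐ[P] fun _ => ε) :
    P[fun ω => Real.exp (s * X' ω)|mt] ≤ᵐ[P] fun _ => Real.exp (s * ε + s ^ 2 * b ^ 2 / 2) := by
  have hbint : ∀ (h : Ω → ℝ) (B : ℝ), StronglyMeasurable[m] h → (∀ ω, |h ω| ≤ B) →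
      Integrable h P := by
    intro h B hh hB
    exact Integrable.mono' (integrable_const B) hh.aestronglyMeasurable
      (Filter.Eventually.of_forall fun ω => by simpa [Real.norm_eq_abs] using hB ω)
  have hX'int : Integrable X' P := hbint X' b hX'm hX'b
  have hexpint : Integrable (fun ω => Real.exp (s * X' ω)) P := by
    refine hbint _ (Real.exp (s * b)) (Real.continuous_exp.comp_stronglyMeasurable
      (hX'm.const_mul s)) fun ω => ?_
    rw [abs_of_pos (Real.exp_pos _)]
    exact Real.exp_le_exp.2 (mul_le_mul_of_nonneg_left ((abs_le.1 (hX'b ω)).2) hs)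
  set c : ℝ := Real.sinh (s * b) / b with hc
  have hrhsint : Integrable (fun ω => Real.cosh (s * b) + c * X' ω) P := by
    exact (integrable_const _).add (hX'int.const_mul c)
  have hmono : P[fun ω => Real.exp (s * X' ω)|mt]
      ≤ᵐ[P] P[fun ω => Real.cosh (s * b) + c * X' ω|mt] := by
    refine condExp_mono hexpint hrhsint (Filter.Eventually.of_forall fun ω => ?_)
    have := aux_exp_le_cosh (s := s) hb (hX'b ω)
    calc Real.exp (s * X' ω) ≤ Real.cosh (s * b) + (X' ω / b) * Real.sinh (s * b) := this
      _ = Real.cosh (s * b) + c * X' ω := by rw [hc]; ring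
  have hsplit : P[fun ω => Real.cosh (s * b) + c * X' ω|mt]
      =ᵐ[P] fun ω => Real.cosh (s * b) + c * (P[X'|mt]) ω := by
    have h1 : (fun ω => Real.cosh (s * b) + c * X' ω)
        = (fun _ => Real.cosh (s * b)) + c • X' := by
      funext ω; simp [Pi.add_apply, Pi.smul_apply, smul_eq_mul]
    rw [h1]
    refine (condExp_add (integrable_const _) (hX'int.smul c) mt).trans ?_
    filter_upwards [condExp_smul (μ := P) (m := mt) c X'] with ω h1
    simp only [Pi.add_apply]
    rw [condExp_const hm, h1]; simp [smul_eq_mul]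
  refine hmono.trans (hsplit.le.trans ?_)
  filter_upwards [hce] with ω h
  exact aux_mgf_bound hs hb hε h

lemma aux_arith1 {Z st e b : ℝ} (hb : 0 < b) (hZ : 0 ≤ Z) (h2 : st * e ≤ Z / 2) :
    Z * (st * e) / (2 * b ^ 2) ≤ Z ^ 2 / (4 * b ^ 2) := by
  rw [div_le_div_iff₀ (by positivity) (by positivity)]
  have h3 : Z * (st * e) ≤ Z * (Z / 2) := mul_le_mul_of_nonneg_left h2 hZ
  nlinarith [mul_le_mul_of_nonneg_right h3 (show (0:ℝ) ≤ 4 * b ^ 2 by positivity)]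

lemma aux_arith2 {Z b L : ℝ} (hb : 0 < b) (hL0 : 0 ≤ L) (hZ2 : 4 * b * Real.sqrt L ≤ Z) :
    2 * L ≤ Z ^ 2 / (8 * b ^ 2) := by
  have h4 : 0 ≤ 4 * b * Real.sqrt L := by positivity
  have h1 : (4 * b * Real.sqrt L) ^ 2 ≤ Z ^ 2 := by nlinarith
  have h2 : (4 * b * Real.sqrt L) ^ 2 = 16 * b ^ 2 * L := by
    have := Real.sq_sqrt hL0; nlinarith
  rw [le_div_iff₀ (by positivity)]
  nlinarith

/-- generalized Azuma inequality for conditionally constrained increments: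
if the conditional expectation of each bounded increment is at most `ε` on the event
that all running sums have stayed below the envelope `Z √t`, and
`Z ≥ 2 max(√k ε, 2b √(log(k|I|/δ)))`, then with probability at least `1 - δ` all the
sums `Y_{t,i}` stay below `Z √t` for all `t ≤ k` and `i ∈ I`. -/
theorem generalized_azuma {Ω : Type*} {m : MeasurableSpace Ω}
    (P : Measure Ω) [IsProbabilityMeasure P]
    (ℱ : Filtration ℕ m) (hF0 : ℱ 0 = ⊥)
    {I : Type*} [Fintype I] [Nonempty I]
    (k : ℕ) (hk : 1 ≤ k) (δ b Z ε : ℝ)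
    (hδ0 : 0 < δ) (hδ1 : δ < 1) (hb : 0 < b) (hε : 0 < ε)
    (hZ : 2 * max (Real.sqrt k * ε)
        (2 * b * Real.sqrt (Real.log (k * Fintype.card I / δ))) ≤ Z)
    (X : ℕ → I → Ω → ℝ)
    (hXb : ∀ t i ω, |X t i ω| ≤ b)
    (hXmeas : ∀ t i, StronglyMeasurable[ℱ (t + 1)] (X t i))
    (Y : ℕ → I → Ω → ℝ)
    (hY0 : ∀ i ω, Y 0 i ω = 0)
    (hYsucc : ∀ t i ω, Y (t + 1) i ω = Y t i ω + X t i ω)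
    (hcond : ∀ i, ∀ t < k, ∀ᵐ ω ∂P,
      (∀ j, Y t j ω ≤ Z * Real.sqrt t) → (P[X t i|ℱ t]) ω ≤ ε) :
    ENNReal.ofReal (1 - δ)
      ≤ P {ω | ∀ t ≤ k, ∀ i, Y t i ω ≤ Z * Real.sqrt t} := by
  classical
  set N : ℕ := Fintype.card I with hN
  set L : ℝ := Real.log (k * N / δ) with hL
  -- basic numerics
  have hN1 : (1:ℝ) ≤ N := by exact_mod_cast Fintype.card_pos
  have hk1 : (1:ℝ) ≤ k := by exact_mod_cast hk
  have hkN : (1:ℝ) ≤ k * N := by nlinarith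
  have hkN0 : (0:ℝ) < k * N := by linarith
  have hq0 : 0 < δ / (k * N) := div_pos hδ0 hkN0
  have hq1 : δ / (k * N) ≤ 1 := (div_le_one hkN0).2 (hδ1.le.trans hkN)
  have hL0 : 0 ≤ L := Real.log_nonneg ((one_le_div hδ0).2 (hδ1.le.trans hkN))
  have hZ1 : Real.sqrt k * ε ≤ Z / 2 := by
    have h := le_max_left (Real.sqrt k * ε) (2 * b * Real.sqrt L)
    linarith [hZ, h]
  have hZ2 : 4 * b * Real.sqrt L ≤ Z := by
    have h := le_max_right (Real.sqrt k * ε) (2 * b * Real.sqrt L)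
    linarith [hZ, h]
  have hZpos : 0 < Z := by
    have h1 : 0 < Real.sqrt k := Real.sqrt_pos.2 (by linarith)
    nlinarith
  -- modified process
  set G : ℕ → Set Ω := fun t => {ω | ∀ s ≤ t, ∀ j, Y s j ω ≤ Z * Real.sqrt s} with hG
  set X' : ℕ → I → Ω → ℝ := fun t i => (G t).indicator (X t i) with hX'
  set Y' : ℕ → I → Ω → ℝ := fun t i ω => ∑ s ∈ Finset.range t, X' s i ω with hY'
  have hY'0 : ∀ i ω, Y' 0 i ω = 0 := by intro i ω; simp [hY']
  have hY'succ : ∀ t i ω, Y' (t + 1) i ω = Y' t i ω + X' t i ω := by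
    intro t i ω; simp [hY', Finset.sum_range_succ]
  have hX'b : ∀ t i ω, |X' t i ω| ≤ b := by
    intro t i ω
    by_cases h : ω ∈ G t
    · simpa [hX', Set.indicator_of_mem h] using hXb t i ω
    · simp [hX', Set.indicator_of_notMem h, hb.le]
  have hY'b : ∀ t i ω, |Y' t i ω| ≤ t * b := by
    intro t i ω
    calc |Y' t i ω| ≤ ∑ s ∈ Finset.range t, |X' s i ω| := Finset.abs_sum_le_sum_abs _ _
      _ ≤ ∑ s ∈ Finset.range t, b := Finset.sum_le_sum fun s _ => hX'b s i ω
      _ = t * b := by simp [mul_comm]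
  -- measurability
  have hYmeas : ∀ t i, StronglyMeasurable[ℱ t] (Y t i) := by
    intro t
    induction t with
    | zero =>
      intro i
      have : Y 0 i = fun _ => (0:ℝ) := funext fun ω => hY0 i ω
      rw [this]; exact stronglyMeasurable_const
    | succ t ih =>
      intro i
      have : Y (t + 1) i = fun ω => Y t i ω + X t i ω := funext fun ω => hYsucc t i ω
      rw [this]
      exact ((ih i).mono (ℱ.mono t.le_succ)).add (hXmeas t i)
  have hGmeas : ∀ t, MeasurableSet[ℱ t] (G t) := by
    intro t
    have hGe : G t = ⋂ s ∈ Set.Iic t, ⋂ j, {ω | Y s j ω ≤ Z * Real.sqrt s} := by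
      ext ω
      simp only [hG, Set.mem_setOf_eq, Set.mem_iInter, Set.mem_Iic]
    rw [hGe]
    refine MeasurableSet.biInter (Set.to_countable _) fun s hs => MeasurableSet.iInter fun j => ?_
    exact ((hYmeas s j).mono (ℱ.mono hs)).measurable measurableSet_Iic
  have hX'meas : ∀ t i, StronglyMeasurable[ℱ (t + 1)] (X' t i) := by
    intro t i
    exact (hXmeas t i).indicator (ℱ.mono t.le_succ _ (hGmeas t))
  have hY'meas : ∀ t i, StronglyMeasurable[ℱ t] (Y' t i) := by
    intro t i
    have : Y' t i = fun ω => ∑ s ∈ Finset.range t, X' s i ω := rfl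
    rw [this]
    exact Finset.stronglyMeasurable_fun_sum _ fun s hs =>
      (hX'meas s i).mono (ℱ.mono (Finset.mem_range.1 hs))
  -- pointwise identification
  have hsets : {ω | ∀ t ≤ k, ∀ i, Y t i ω ≤ Z * Real.sqrt t}
      = {ω | ∀ t ≤ k, ∀ i, Y' t i ω ≤ Z * Real.sqrt t} := by
    ext ω
    simp only [Set.mem_setOf_eq]
    constructor
    · intro h
      have heq : ∀ t, t ≤ k → ∀ i, Y' t i ω = Y t i ω := by
        intro t
        induction t with
        | zero => intro _ i; rw [hY'0, hY0]
        | succ t ih =>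
          intro ht i
          have ht' : t ≤ k := Nat.le_of_succ_le ht
          have hmem : ω ∈ G t := fun s hs j => h s (hs.trans ht') j
          rw [hY'succ, hYsucc, ih ht' i]
          congr 1
          simp [hX', Set.indicator_of_mem hmem]
      intro t ht i
      rw [heq t ht i]; exact h t ht i
    · intro h
      have key : ∀ t, t ≤ k → (∀ i, Y' t i ω = Y t i ω) ∧ ω ∈ G t := by
        intro t
        induction t with
        | zero =>
          intro _
          refine ⟨fun i => by rw [hY'0, hY0], fun s hs j => ?_⟩
          interval_cases s
          rw [hY0]; simp
        | succ t ih =>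
          intro ht
          obtain ⟨heq, hmem⟩ := ih (Nat.le_of_succ_le ht)
          have heq' : ∀ i, Y' (t + 1) i ω = Y (t + 1) i ω := by
            intro i
            rw [hY'succ, hYsucc, heq i]
            congr 1
            simp [hX', Set.indicator_of_mem hmem]
          refine ⟨heq', fun s hs j => ?_⟩
          by_cases hs' : s ≤ t
          · exact hmem s hs' j
          · have : s = t + 1 := le_antisymm hs (not_le.1 hs')
            subst this
            rw [← heq' j]
            exact h (t + 1) ht j
      intro t ht i
      rw [← (key t ht).1 i]; exact h t ht i
  -- conditional expectation bound for modified increments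
  have hce : ∀ i, ∀ t < k, P[X' t i|ℱ t] ≤ᵐ[P] fun _ => ε := by
    intro i t ht
    have hXint : Integrable (X t i) P :=
      Integrable.mono' (integrable_const b) ((hXmeas t i).mono (ℱ.le (t+1))).aestronglyMeasurable
        (Filter.Eventually.of_forall fun ω => by simpa [Real.norm_eq_abs] using hXb t i ω)
    have hind := condExp_indicator (μ := P) (m := ℱ t) hXint (hGmeas t)
    filter_upwards [hind, hcond i t ht] with ω h1 h2
    have hXX : X' t i = (G t).indicator (X t i) := rfl
    rw [hXX, h1]
    by_cases hω : ω ∈ G t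
    · rw [Set.indicator_of_mem hω]
      exact h2 fun j => hω t le_rfl j
    · rw [Set.indicator_of_notMem hω]
      exact hε.le
  -- mgf bound
  have hmgf : ∀ (i : I) (s : ℝ), 0 ≤ s → ∀ t, t ≤ k →
      ∫ ω, Real.exp (s * Y' t i ω) ∂P
        ≤ Real.exp (t * (s * ε + s ^ 2 * b ^ 2 / 2)) := by
    intro i s hs t
    induction t with
    | zero =>
      intro _
      simp only [Nat.cast_zero, zero_mul, Real.exp_zero]
      have : ∀ ω, Real.exp (s * Y' 0 i ω) = 1 := fun ω => by rw [hY'0]; simp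
      rw [integral_congr_ae (Filter.Eventually.of_forall this)]
      simp
    | succ t ih =>
      intro ht
      have ht' : t ≤ k := Nat.le_of_succ_le ht
      have htk : t < k := ht
      set u : ℝ := s * ε + s ^ 2 * b ^ 2 / 2 with hu
      have hsplitfun : (fun ω => Real.exp (s * Y' (t + 1) i ω))
          = fun ω => Real.exp (s * Y' t i ω) * Real.exp (s * X' t i ω) := by
        funext ω
        rw [hY'succ, mul_add, Real.exp_add]
      have hgc : P[fun ω => Real.exp (s * X' t i ω)|ℱ t] ≤ᵐ[P] fun _ => Real.exp u :=
        aux_condexp_mgf P (ℱ.le t) hs hb hε.le ((hX'meas t i).mono (ℱ.le (t + 1)))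
          (fun ω => hX'b t i ω) (hce i t htk)
      have hstep : ∫ ω, Real.exp (s * Y' t i ω) * Real.exp (s * X' t i ω) ∂P
          ≤ Real.exp u * ∫ ω, Real.exp (s * Y' t i ω) ∂P := by
        refine aux_tower P (ℱ.le t) (Real.exp u) (Real.exp (s * (t * b))) (Real.exp (s * b))
          (Real.continuous_exp.comp_stronglyMeasurable ((hY'meas t i).const_mul s))
          (fun ω => ?_) (fun ω => (Real.exp_pos _).le)
          (Real.continuous_exp.comp_stronglyMeasurable
            (((hX'meas t i).mono (ℱ.le (t + 1))).const_mul s))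
          (fun ω => ?_) (fun ω => (Real.exp_pos _).le) hgc
        · rw [abs_of_pos (Real.exp_pos _)]
          exact Real.exp_le_exp.2 (mul_le_mul_of_nonneg_left
            ((abs_le.1 (hY'b t i ω)).2) hs)
        · rw [abs_of_pos (Real.exp_pos _)]
          exact Real.exp_le_exp.2 (mul_le_mul_of_nonneg_left
            ((abs_le.1 (hX'b t i ω)).2) hs)
      calc ∫ ω, Real.exp (s * Y' (t + 1) i ω) ∂P
          = ∫ ω, Real.exp (s * Y' t i ω) * Real.exp (s * X' t i ω) ∂P := by
            rw [hsplitfun]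
        _ ≤ Real.exp u * ∫ ω, Real.exp (s * Y' t i ω) ∂P := hstep
        _ ≤ Real.exp u * Real.exp (t * u) :=
            mul_le_mul_of_nonneg_left (ih ht') (Real.exp_pos _).le
        _ = Real.exp ((t + 1 : ℕ) * u) := by
            rw [← Real.exp_add]; push_cast; ring_nf
  -- tail bound
  have htail : ∀ (i : I) (t : ℕ), 1 ≤ t → t ≤ k →
      P {ω | Z * Real.sqrt t < Y' t i ω} ≤ ENNReal.ofReal (δ / (k * N)) := by
    intro i t ht1 htk
    have ht0 : (0:ℝ) < t := by exact_mod_cast ht1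
    set st : ℝ := Real.sqrt t with hst_def
    have hst : 0 < st := Real.sqrt_pos.2 ht0
    have hst2 : st ^ 2 = t := Real.sq_sqrt ht0.le
    have hstk : st ≤ Real.sqrt k := Real.sqrt_le_sqrt (by exact_mod_cast htk)
    set s : ℝ := Z / (2 * st * b ^ 2) with hs_def
    have hs : 0 < s := div_pos hZpos (by positivity)
    set u : ℝ := s * ε + s ^ 2 * b ^ 2 / 2 with hu
    have hkey := hmgf i s hs.le t htk
    -- Markov
    have hWmeas : StronglyMeasurable[m] fun ω => Real.exp (s * Y' t i ω) :=
      Real.continuous_exp.comp_stronglyMeasurable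
        (((hY'meas t i).mono (ℱ.le t)).const_mul s)
    have hWint : Integrable (fun ω => Real.exp (s * Y' t i ω)) P := by
      refine Integrable.mono' (integrable_const (Real.exp (s * (t * b))))
        hWmeas.aestronglyMeasurable (Filter.Eventually.of_forall fun ω => ?_)
      rw [Real.norm_eq_abs, abs_of_pos (Real.exp_pos _)]
      exact Real.exp_le_exp.2 (mul_le_mul_of_nonneg_left ((abs_le.1 (hY'b t i ω)).2) hs.le)
    have hmark := mul_meas_ge_le_integral_of_nonneg (μ := P)
      (Filter.Eventually.of_forall fun ω => (Real.exp_pos (s * Y' t i ω)).le) hWint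
      (Real.exp (s * (Z * st)))
    have hsub : {ω | Z * st < Y' t i ω}
        ⊆ {ω | Real.exp (s * (Z * st)) ≤ Real.exp (s * Y' t i ω)} := fun ω hω =>
      Real.exp_le_exp.2 (mul_le_mul_of_nonneg_left (le_of_lt hω) hs.le)
    have hPA : (P {ω | Z * st < Y' t i ω}).toReal
        ≤ (P {ω | Real.exp (s * (Z * st)) ≤ Real.exp (s * Y' t i ω)}).toReal :=
      ENNReal.toReal_mono (measure_ne_top _ _) (measure_mono hsub)
    have hmain : Real.exp (s * (Z * st)) * (P {ω | Z * st < Y' t i ω}).toReal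
        ≤ Real.exp (t * u) := by
      refine le_trans ?_ hkey
      refine le_trans (mul_le_mul_of_nonneg_left hPA (Real.exp_pos _).le) hmark
    -- arithmetic: t * u - s * (Z * st) ≤ -2L
    have hA2 : (t:ℝ) * (s ^ 2 * b ^ 2 / 2) = Z ^ 2 / (8 * b ^ 2) := by
      rw [← hst2, hs_def]; field_simp; ring
    have hA3 : s * (Z * st) = Z ^ 2 / (2 * b ^ 2) := by
      rw [hs_def]; field_simp
    have hA1 : (t:ℝ) * (s * ε) ≤ Z ^ 2 / (4 * b ^ 2) := by
      have h1 : (t:ℝ) * (s * ε) = Z * (st * ε) / (2 * b ^ 2) := by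
        rw [← hst2, hs_def]; field_simp
      have h2 : st * ε ≤ Z / 2 :=
        le_trans (mul_le_mul_of_nonneg_right hstk hε.le) hZ1
      rw [h1]
      exact aux_arith1 hb hZpos.le h2
    have hA4 : 2 * L ≤ Z ^ 2 / (8 * b ^ 2) := aux_arith2 hb hL0 hZ2
    have hexp : (t:ℝ) * u - s * (Z * st) ≤ -(2 * L) := by
      rw [hu, mul_add, hA3]
      have e1 : Z ^ 2 / (4 * b ^ 2) = 2 * (Z ^ 2 / (8 * b ^ 2)) := by
        field_simp; ring
      have e2 : Z ^ 2 / (2 * b ^ 2) = 4 * (Z ^ 2 / (8 * b ^ 2)) := by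
        field_simp; ring
      linarith [hA1, hA2, hA4]
    -- convert to probability bound
    have hq : Real.exp (-(2 * L)) ≤ δ / (k * N) := by
      have hpos : (0:ℝ) < (k:ℝ) * N / δ := by positivity
      have h1 : Real.exp (-L) = δ / (k * N) := by
        rw [hL, Real.exp_neg, Real.exp_log hpos, inv_div]
      have h2 : Real.exp (-(2 * L)) = Real.exp (-L) * Real.exp (-L) := by
        rw [← Real.exp_add]; ring_nf
      rw [h2, h1]
      calc δ / (↑k * ↑N) * (δ / (↑k * ↑N)) ≤ 1 * (δ / (↑k * ↑N)) :=
            mul_le_mul_of_nonneg_right hq1 hq0.le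
        _ = δ / (↑k * ↑N) := one_mul _
    have hfinal : (P {ω | Z * st < Y' t i ω}).toReal ≤ δ / (k * N) := by
      have he : (0:ℝ) < Real.exp (s * (Z * st)) := Real.exp_pos _
      have h1 : (P {ω | Z * st < Y' t i ω}).toReal
          ≤ Real.exp ((t:ℝ) * u) / Real.exp (s * (Z * st)) := by
        rw [le_div_iff₀ he]
        linarith [hmain]
      have h2 : Real.exp ((t:ℝ) * u) / Real.exp (s * (Z * st))
          = Real.exp ((t:ℝ) * u - s * (Z * st)) := (Real.exp_sub _ _).symm
      refine h1.trans ?_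
      rw [h2]
      exact (Real.exp_le_exp.2 hexp).trans hq
    exact (ENNReal.le_ofReal_iff_toReal_le (measure_ne_top _ _) hq0.le).2 hfinal
  -- conclusion
  rw [hsets]
  set A : ℕ → I → Set Ω := fun t i => {ω | Z * Real.sqrt t < Y' t i ω} with hA
  set Good : Set Ω := {ω | ∀ t ≤ k, ∀ i, Y' t i ω ≤ Z * Real.sqrt t} with hGood
  have hGoodmeas : MeasurableSet Good := by
    have hGe : Good = ⋂ t ∈ Set.Iic k, ⋂ i, {ω | Y' t i ω ≤ Z * Real.sqrt t} := by
      ext ω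
      simp only [hGood, Set.mem_setOf_eq, Set.mem_iInter, Set.mem_Iic]
    rw [hGe]
    refine MeasurableSet.biInter (Set.to_countable _) fun t _ =>
      MeasurableSet.iInter fun i => ?_
    exact ((hY'meas t i).mono (ℱ.le t)).measurable measurableSet_Iic
  have hsubU : Goodᶜ ⊆ ⋃ t ∈ Finset.Icc 1 k, ⋃ i, A t i := by
    intro ω hω
    simp only [hGood, Set.mem_compl_iff, Set.mem_setOf_eq] at hω
    push_neg at hω
    obtain ⟨t, ht, i, hlt⟩ := hω
    have ht1 : 1 ≤ t := by
      by_contra h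
      have : t = 0 := by omega
      subst this
      rw [hY'0] at hlt
      simp at hlt
    simp only [Set.mem_iUnion, Finset.mem_Icc]
    exact ⟨t, ⟨ht1, ht⟩, i, hlt⟩
  have hbad : P Goodᶜ ≤ ENNReal.ofReal δ := by
    calc P Goodᶜ ≤ P (⋃ t ∈ Finset.Icc 1 k, ⋃ i, A t i) := measure_mono hsubU
      _ ≤ ∑ t ∈ Finset.Icc 1 k, P (⋃ i, A t i) := measure_biUnion_finset_le _ _
      _ ≤ ∑ t ∈ Finset.Icc 1 k, ∑ i : I, P (A t i) :=
          Finset.sum_le_sum fun t _ => measure_iUnion_fintype_le P _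
      _ ≤ ∑ t ∈ Finset.Icc 1 k, ∑ _i : I, ENNReal.ofReal (δ / (k * N)) := by
          refine Finset.sum_le_sum fun t ht => Finset.sum_le_sum fun i _ => ?_
          obtain ⟨h1, h2⟩ := Finset.mem_Icc.1 ht
          exact htail i t h1 h2
      _ = ENNReal.ofReal δ := by
          rw [Finset.sum_const, Finset.sum_const, Nat.card_Icc, Finset.card_univ, ← hN]
          rw [smul_smul, nsmul_eq_mul, ← ENNReal.ofReal_natCast,
            ← ENNReal.ofReal_mul (by positivity)]
          congr 1
          push_cast
          field_simp
  have hcompl : P Good = 1 - P Goodᶜ := by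
    have h := prob_compl_eq_one_sub (μ := P) hGoodmeas.compl
    rw [compl_compl] at h
    exact h
  calc ENNReal.ofReal (1 - δ) = 1 - ENNReal.ofReal δ := by
        rw [ENNReal.ofReal_sub _ hδ0.le, ENNReal.ofReal_one]
    _ ≤ 1 - P Goodᶜ := tsub_le_tsub_left hbad 1
    _ = P Good := hcompl.symm
end

section
/- Consider the proximal problem $\min_{x \in \Delta_n} \langle q, x \rangle - \sum_{a=1}^n x_a^p$ for $p \in (0,1)$ and $q \in \mathbb{R}^n$. Define $\phi(\mu) = \sum_{a=1}^n \left(\frac{p}{q_a - \mu}\right)^{1/(1-p)} - 1$, $l = \min_a q_a - p\, n^{1-p}$, and $h = \min_a q_a - p$. Then $\phi$ is strictly increasing on $[l, h]$ and has a unique root $\mu^* \in [l, h]$; moreover the unique minimizer $x^*$ of the proximal problem lies in the relative interior of $\Delta_n$ and satisfies $x^*_a = \left(\frac{q_a - \mu^*}{p}\right)^{1/(p-1)}$ for every $a$. -/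
open Finset

private lemma tangent_rpow {p : ℝ} (hp0 : 0 < p) (hp1 : p < 1) {x y : ℝ}
    (hx : 0 < x) (hy : 0 ≤ y) :
    y ^ p ≤ x ^ p + p * x ^ (p - 1) * (y - x) := by
  have hgm := Real.geom_mean_le_arith_mean2_weighted (w₁ := p) (w₂ := 1 - p)
    (p₁ := x ^ (p - 1) * y) (p₂ := x ^ p) hp0.le (by linarith : (0:ℝ) ≤ 1 - p)
    (mul_nonneg (Real.rpow_nonneg hx.le _) hy) (Real.rpow_nonneg hx.le p) (by ring)
  have key : y ^ p ≤ p * (x ^ (p - 1) * y) + (1 - p) * x ^ p := by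
    calc y ^ p = (x ^ (p-1) * y) ^ p * (x ^ p) ^ (1 - p) := by
          rw [Real.mul_rpow (Real.rpow_nonneg hx.le _) hy, ← Real.rpow_mul hx.le,
            ← Real.rpow_mul hx.le, mul_comm (x ^ ((p-1)*p)) (y^p), mul_assoc,
            ← Real.rpow_add hx]
          rw [show (p - 1) * p + p * (1 - p) = 0 by ring, Real.rpow_zero, mul_one]
      _ ≤ _ := hgm
  have hxx : x ^ (p - 1) * x = x ^ p := by
    rw [← Real.rpow_add_one hx.ne']; norm_num
  nlinarith [key, hxx]

private lemma mid_rpow_le {p : ℝ} (hp0 : 0 < p) (hp1 : p < 1) {u v : ℝ}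
    (hu : 0 ≤ u) (hv : 0 ≤ v) : (u ^ p + v ^ p) / 2 ≤ ((u + v) / 2) ^ p := by
  have := (Real.strictConcaveOn_rpow hp0 hp1).concaveOn.2 (Set.mem_Ici.mpr hu)
    (Set.mem_Ici.mpr hv) (by norm_num : (0:ℝ) ≤ 1/2) (by norm_num : (0:ℝ) ≤ 1/2) (by norm_num)
  simp only [smul_eq_mul] at this
  rw [show (u + v)/2 = 1/2 * u + 1/2 * v by ring]
  linarith

private lemma mid_rpow_lt {p : ℝ} (hp0 : 0 < p) (hp1 : p < 1) {u v : ℝ}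
    (hu : 0 ≤ u) (hv : 0 ≤ v) (huv : u ≠ v) : (u ^ p + v ^ p) / 2 < ((u + v) / 2) ^ p := by
  have := (Real.strictConcaveOn_rpow hp0 hp1).2 (Set.mem_Ici.mpr hu)
    (Set.mem_Ici.mpr hv) huv (by norm_num : (0:ℝ) < 1/2) (by norm_num : (0:ℝ) < 1/2) (by norm_num)
  simp only [smul_eq_mul] at this
  rw [show (u + v)/2 = 1/2 * u + 1/2 * v by ring]
  linarith

/-- characterization of the Tsallis proximal subproblem
`min_{x ∈ Δ} ⟨q, x⟩ - ∑ x_a^p`: the dual function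
`φ(μ) = ∑ (p/(q_a - μ))^(1/(1-p)) - 1` is strictly increasing on `[l, h]` with a unique
root `μ*` there, and every minimizer `x*` lies in the relative interior of the simplex
and satisfies `x*_a = ((q_a - μ*)/p)^(1/(p-1))`. -/
theorem tsallis_prox_characterization {ι : Type*} [Fintype ι] [Nonempty ι]
    (p : ℝ) (hp0 : 0 < p) (hp1 : p < 1) (q : ι → ℝ)
    (φ : ℝ → ℝ)
    (hφ : ∀ μ, φ μ = (∑ a, (p / (q a - μ)) ^ ((1 : ℝ) / (1 - p))) - 1)
    (l h : ℝ)
    (hl : l = (⨅ a, q a) - p * (Fintype.card ι : ℝ) ^ ((1 : ℝ) - p))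
    (hh : h = (⨅ a, q a) - p) :
    StrictMonoOn φ (Set.Icc l h) ∧
    ∃ μs ∈ Set.Icc l h, φ μs = 0 ∧
      (∀ μ ∈ Set.Icc l h, φ μ = 0 → μ = μs) ∧
      (∃ x : ι → ℝ, (∀ a, 0 ≤ x a) ∧ (∑ a, x a = 1) ∧
        ∀ y : ι → ℝ, (∀ a, 0 ≤ y a) → (∑ a, y a = 1) →
          (∑ a, q a * x a) - (∑ a, x a ^ p) ≤ (∑ a, q a * y a) - ∑ a, y a ^ p) ∧
      ∀ x : ι → ℝ, (∀ a, 0 ≤ x a) → (∑ a, x a = 1) →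
        (∀ y : ι → ℝ, (∀ a, 0 ≤ y a) → (∑ a, y a = 1) →
          (∑ a, q a * x a) - (∑ a, x a ^ p) ≤ (∑ a, q a * y a) - ∑ a, y a ^ p) →
        ∀ a, 0 < x a ∧ x a = ((q a - μs) / p) ^ ((1 : ℝ) / (p - 1)) := by
  have hp1' : (0:ℝ) < 1 - p := by linarith
  set c : ℝ := (1:ℝ) / (1 - p) with hc
  have hcpos : 0 < c := div_pos one_pos hp1'
  set m := ⨅ a, q a with hm
  have hbdd : BddBelow (Set.range q) := (Set.finite_range q).bddBelow
  have hmle : ∀ a, m ≤ q a := fun a => ciInf_le hbdd a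
  obtain ⟨a0, ha0⟩ : ∃ a0, ∀ a, q a0 ≤ q a := Finite.exists_min q
  have hma0 : m = q a0 := le_antisymm (hmle a0) (le_ciInf ha0)
  have hNpos : (0:ℝ) < (Fintype.card ι : ℝ) := by exact_mod_cast Fintype.card_pos
  have hn1 : (1:ℝ) ≤ (Fintype.card ι : ℝ) := by exact_mod_cast Fintype.card_pos
  have hcard : (1:ℝ) ≤ (Fintype.card ι : ℝ) ^ ((1:ℝ) - p) := by
    calc (1:ℝ) = (1:ℝ) ^ ((1:ℝ) - p) := (Real.one_rpow _).symm
      _ ≤ _ := Real.rpow_le_rpow zero_le_one hn1 (by linarith)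
  have hlh : l ≤ h := by rw [hl, hh]; nlinarith
  have hposd : ∀ μ ∈ Set.Icc l h, ∀ a, p ≤ q a - μ := by
    intro μ hμ a
    have h2 := hμ.2
    rw [hh] at h2
    have := hmle a
    linarith
  -- strict monotonicity
  have hmono : StrictMonoOn φ (Set.Icc l h) := by
    intro μ1 h1 μ2 h2 h12
    rw [hφ, hφ]
    apply sub_lt_sub_right
    apply Finset.sum_lt_sum_of_nonempty univ_nonempty
    intro a _
    have hd2 : 0 < q a - μ2 := lt_of_lt_of_le hp0 (hposd μ2 h2 a)
    have hd1 : q a - μ2 < q a - μ1 := by linarith [h12]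
    exact Real.rpow_lt_rpow (div_nonneg hp0.le (by linarith : (0:ℝ) ≤ q a - μ1))
      (div_lt_div_of_pos_left hp0 hd2 hd1) hcpos
  refine ⟨hmono, ?_⟩
  -- continuity
  have hcont : ContinuousOn φ (Set.Icc l h) := by
    have hφ' : φ = fun μ => (∑ a, (p / (q a - μ)) ^ c) - 1 := funext hφ
    rw [hφ']
    apply ContinuousOn.sub _ continuousOn_const
    apply continuousOn_finset_sum
    intro a _
    apply (Real.continuous_rpow_const hcpos.le).comp_continuousOn
    apply ContinuousOn.div continuousOn_const
      ((continuous_const.sub continuous_id).continuousOn)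
    intro μ hμ
    exact ne_of_gt (lt_of_lt_of_le hp0 (hposd μ hμ a))
  -- endpoint values
  have hφl : φ l ≤ 0 := by
    rw [hφ]
    have hterm : ∀ a, (p / (q a - l)) ^ c ≤ (1:ℝ) / (Fintype.card ι : ℝ) := by
      intro a
      set N : ℝ := (Fintype.card ι : ℝ)
      have hEpos : 0 < N ^ ((1:ℝ) - p) := Real.rpow_pos_of_pos hNpos _
      have hden : p * N ^ ((1:ℝ) - p) ≤ q a - l := by
        rw [hl]; have := hmle a; linarith
      have hDpos : 0 < q a - l := lt_of_lt_of_le (by positivity) hden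
      have hx : p / (q a - l) ≤ 1 / N ^ ((1:ℝ) - p) := by
        rw [div_le_div_iff₀ hDpos hEpos]
        nlinarith
      have hEc : ((1:ℝ) / N ^ ((1:ℝ) - p)) ^ c = 1 / N := by
        rw [one_div, ← Real.rpow_neg hNpos.le, ← Real.rpow_mul hNpos.le]
        rw [show -((1:ℝ) - p) * c = -1 by rw [hc]; field_simp]
        rw [Real.rpow_neg_one, one_div]
      calc (p / (q a - l)) ^ c ≤ ((1:ℝ) / N ^ ((1:ℝ) - p)) ^ c :=
            Real.rpow_le_rpow (div_nonneg hp0.le hDpos.le) hx hcpos.le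
        _ = 1 / N := hEc
    have hsum : ∑ a, (p / (q a - l)) ^ c ≤ 1 := by
      calc ∑ a, (p / (q a - l)) ^ c ≤ ∑ _a : ι, (1:ℝ) / (Fintype.card ι : ℝ) :=
            Finset.sum_le_sum fun a _ => hterm a
        _ = (Fintype.card ι : ℝ) * ((1:ℝ) / (Fintype.card ι : ℝ)) := by
            rw [Finset.sum_const, card_univ, nsmul_eq_mul]
        _ = 1 := by field_simp
    linarith
  have hφh : 0 ≤ φ h := by
    rw [hφ]
    have hmem : h ∈ Set.Icc l h := Set.right_mem_Icc.mpr hlh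
    have h1 : (p / (q a0 - h)) ^ c = 1 := by
      rw [hh, ← hma0, show m - (m - p) = p by ring, div_self hp0.ne', Real.one_rpow]
    have hle : (p / (q a0 - h)) ^ c ≤ ∑ a, (p / (q a - h)) ^ c := by
      apply Finset.single_le_sum (f := fun a => (p / (q a - h)) ^ c) _ (mem_univ a0)
      intro a _
      exact Real.rpow_nonneg (div_nonneg hp0.le (by linarith [hposd h hmem a])) _
    rw [h1] at hle
    linarith
  -- root by IVT
  obtain ⟨μs, hμs, hroot⟩ := intermediate_value_Icc hlh hcont ⟨hφl, hφh⟩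
  -- the minimizer
  have hqμ : ∀ a, p ≤ q a - μs := hposd μs hμs
  set xs : ι → ℝ := fun a => ((q a - μs) / p) ^ ((1:ℝ) / (p - 1)) with hxs
  have htpos : ∀ a, 0 < (q a - μs) / p := fun a => div_pos (lt_of_lt_of_le hp0 (hqμ a)) hp0
  have hxpos : ∀ a, 0 < xs a := fun a => Real.rpow_pos_of_pos (htpos a) _
  have hflip : ∀ a, xs a = (p / (q a - μs)) ^ c := by
    intro a
    have hd : (0:ℝ) ≤ p / (q a - μs) := div_nonneg hp0.le (by linarith [hqμ a])
    simp only [hxs]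
    rw [show (q a - μs) / p = (p / (q a - μs))⁻¹ by rw [inv_div],
      Real.inv_rpow hd, ← Real.rpow_neg hd]
    congr 1
    rw [hc, show (1:ℝ) - p = -(p - 1) by ring, div_neg]
  have hsum : ∑ a, xs a = 1 := by
    have h2 := hroot
    rw [hφ] at h2
    calc ∑ a, xs a = ∑ a, (p / (q a - μs)) ^ c :=
          Finset.sum_congr rfl fun a _ => hflip a
      _ = 1 := by linarith
  have hp1ne : p - 1 ≠ 0 := by linarith
  have hgrad : ∀ a, p * xs a ^ (p - 1) = q a - μs := by
    intro a
    simp only [hxs]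
    rw [← Real.rpow_mul (htpos a).le, one_div_mul_cancel hp1ne, Real.rpow_one]
    field_simp
  have hmin : ∀ y : ι → ℝ, (∀ a, 0 ≤ y a) → (∑ a, y a = 1) →
      (∑ a, q a * xs a) - (∑ a, xs a ^ p) ≤ (∑ a, q a * y a) - ∑ a, y a ^ p := by
    intro y hy hysum
    have key : ∀ a, y a ^ p ≤ xs a ^ p + (q a - μs) * (y a - xs a) := by
      intro a
      have ht := tangent_rpow hp0 hp1 (hxpos a) (hy a)
      rw [hgrad a] at ht
      exact ht
    have hsi := Finset.sum_le_sum (fun a (_ : a ∈ univ) => key a)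
    rw [Finset.sum_add_distrib] at hsi
    have hexp : ∑ a, (q a - μs) * (y a - xs a) = (∑ a, q a * y a) - ∑ a, q a * xs a := by
      have he : ∀ a, (q a - μs) * (y a - xs a)
          = (q a * y a - q a * xs a) - (μs * y a - μs * xs a) := fun a => by ring
      simp_rw [he]
      rw [Finset.sum_sub_distrib, Finset.sum_sub_distrib, Finset.sum_sub_distrib,
        ← Finset.mul_sum, ← Finset.mul_sum, hsum, hysum]
      ring
    rw [hexp] at hsi
    linarith
  refine ⟨μs, hμs, hroot, ?_, ⟨xs, fun a => (hxpos a).le, hsum, hmin⟩, ?_⟩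
  · intro μ hμ h0
    exact hmono.injOn hμ hμs (by rw [h0, hroot])
  · intro x hx hxsum hxmin
    have hxe : ∀ a, x a = xs a := by
      by_contra hcon
      push_neg at hcon
      obtain ⟨b, hb⟩ := hcon
      set z : ι → ℝ := fun a => (x a + xs a) / 2 with hz
      have hznn : ∀ a, 0 ≤ z a := by
        intro a
        simp only [hz]
        exact div_nonneg (add_nonneg (hx a) (hxpos a).le) (by norm_num)
      have hzsum : ∑ a, z a = 1 := by
        simp only [hz]
        rw [← Finset.sum_div, Finset.sum_add_distrib, hxsum, hsum]
        norm_num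
      have hzp : ∀ a, (x a ^ p + xs a ^ p) / 2 ≤ z a ^ p :=
        fun a => mid_rpow_le hp0 hp1 (hx a) (hxpos a).le
      have hzpb : (x b ^ p + xs b ^ p) / 2 < z b ^ p :=
        mid_rpow_lt hp0 hp1 (hx b) (hxpos b).le hb
      have hsum_lt : ∑ a, (x a ^ p + xs a ^ p) / 2 < ∑ a, z a ^ p :=
        Finset.sum_lt_sum (fun a _ => hzp a) ⟨b, mem_univ b, hzpb⟩
      have hfx : (∑ a, q a * x a) - (∑ a, x a ^ p) = (∑ a, q a * xs a) - ∑ a, xs a ^ p :=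
        le_antisymm (hxmin xs (fun a => (hxpos a).le) hsum) (hmin x hx hxsum)
      have hqz : ∑ a, q a * z a = ((∑ a, q a * x a) + ∑ a, q a * xs a) / 2 := by
        rw [← Finset.sum_add_distrib, Finset.sum_div]
        apply Finset.sum_congr rfl
        intro a _
        simp only [hz]
        ring
      have hhalf : ∑ a, (x a ^ p + xs a ^ p) / 2 = ((∑ a, x a ^ p) + ∑ a, xs a ^ p) / 2 := by
        rw [← Finset.sum_add_distrib, ← Finset.sum_div]
      have hcontr := hmin z hznn hzsum
      rw [hqz] at hcontr
      rw [hhalf] at hsum_lt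
      linarith
    intro a
    refine ⟨?_, ?_⟩
    · rw [hxe a]; exact hxpos a
    · rw [hxe a, hxs]
end

section
/- Bias of the VBE-II estimator: let $\pi$ induce a geometrically mixing state-action chain with constants $(C, \rho)$ and stationary state distribution bounded below by $\underline{\nu} > 0$, let $t_{\mathrm{mix}} = \lceil \log_\rho(\underline{\nu}/(2C)) \rceil$, and define the single-trajectory estimator $Q^{\pi,\xi,n}(s,a) = \frac{\mathbf{1}\{a = A_{\tau(s)}\}}{\pi(a|s)} \sum_{t=\tau(s)}^{n-1} \gamma^{t - \tau(s)} c(S_t, A_t)$ if the truncated state hitting time $\tau(s) \le n-1$, and $0$ otherwise. Then $\left\|\mathbb{E}_\xi[Q^{\pi,\xi,n}] - Q^\pi\right\|_\infty \le \frac{2(n+1)}{1-\gamma}\left[\gamma^{n-1} + \left(1 - \frac{\underline{\nu}}{2 t_{\mathrm{mix}}}\right)^{n-1}\right]$. -/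
open Finset

noncomputable def surv {Z : Type*} [Fintype Z] [DecidableEq Z]
    (P : Z → Z → ℝ) (z : Z) : ℕ → Z → ℝ
  | 0, _ => 1
  | t + 1, z0 => if z0 = z then 0 else ∑ u, P z0 u * surv P z t u

section aux
variable {Z : Type*} [Fintype Z] [DecidableEq Z] (P : Z → Z → ℝ) (s : Z)

lemma kpow_zero (x y : Z) : kpow P 0 x y = if x = y then 1 else 0 := rfl
lemma kpow_succ (t : ℕ) (x y : Z) :
    kpow P (t + 1) x y = ∑ u, P x u * kpow P t u y := rfl
lemma surv_zero (z0 : Z) : surv P s 0 z0 = 1 := rfl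
lemma surv_succ (t : ℕ) (z0 : Z) :
    surv P s (t + 1) z0 = if z0 = s then 0 else ∑ u, P z0 u * surv P s t u := rfl
lemma hitProb_zero (z0 : Z) : hitProb P s 0 z0 = if z0 = s then 1 else 0 := rfl
lemma hitProb_succ (t : ℕ) (z0 : Z) :
    hitProb P s (t + 1) z0 = if z0 = s then 0 else ∑ u, P z0 u * hitProb P s t u := rfl

lemma kpow_nonneg_s19 (hP0 : ∀ x y, 0 ≤ P x y) : ∀ t x y, 0 ≤ kpow P t x y := by
  intro t
  induction t with
  | zero => intro x y; rw [kpow_zero]; positivity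
  | succ t ih =>
      intro x y; rw [kpow_succ]
      exact Finset.sum_nonneg fun u _ => mul_nonneg (hP0 _ _) (ih _ _)

lemma kpow_sum_s19 (hP1 : ∀ x, ∑ y, P x y = 1) : ∀ t x, ∑ y, kpow P t x y = 1 := by
  intro t
  induction t with
  | zero => intro x; simp [kpow_zero]
  | succ t ih =>
      intro x
      simp only [kpow_succ]
      rw [Finset.sum_comm]
      simp [← Finset.mul_sum, ih, hP1]

lemma surv_nonneg (hP0 : ∀ x y, 0 ≤ P x y) : ∀ t z0, 0 ≤ surv P s t z0 := by
  intro t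
  induction t with
  | zero => intro z0; rw [surv_zero]; norm_num
  | succ t ih =>
      intro z0; rw [surv_succ]
      split
      · exact le_refl 0
      · exact Finset.sum_nonneg fun u _ => mul_nonneg (hP0 _ _) (ih _)

lemma surv_le_one (hP0 : ∀ x y, 0 ≤ P x y) (hP1 : ∀ x, ∑ y, P x y = 1) : ∀ t z0, surv P s t z0 ≤ 1 := by
  intro t
  induction t with
  | zero => intro z0; rw [surv_zero]
  | succ t ih =>
      intro z0; rw [surv_succ]
      split
      · norm_num
      · calc ∑ u, P z0 u * surv P s t u ≤ ∑ u, P z0 u * 1 :=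
              Finset.sum_le_sum fun u _ => mul_le_mul_of_nonneg_left (ih u) (hP0 _ _)
          _ = 1 := by simp [hP1]

lemma surv_succ_le (hP0 : ∀ x y, 0 ≤ P x y) (hP1 : ∀ x, ∑ y, P x y = 1) : ∀ t z0, surv P s (t + 1) z0 ≤ surv P s t z0 := by
  intro t
  induction t with
  | zero => intro z0; rw [surv_zero]; exact surv_le_one P s hP0 hP1 1 z0
  | succ t ih =>
      intro z0; rw [surv_succ, surv_succ]
      split
      · exact le_refl 0
      · exact Finset.sum_le_sum fun u _ => mul_le_mul_of_nonneg_left (ih u) (hP0 _ _)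

lemma surv_anti (hP0 : ∀ x y, 0 ≤ P x y) (hP1 : ∀ x, ∑ y, P x y = 1) {t t' : ℕ} (h : t ≤ t') (z0 : Z) : surv P s t' z0 ≤ surv P s t z0 := by
  induction t' with
  | zero => simp_all
  | succ t' ih =>
      rcases Nat.lt_or_ge t (t' + 1) with h' | h'
      · exact le_trans (surv_succ_le P s hP0 hP1 t' z0) (ih (Nat.lt_succ_iff.mp h'))
      · have : t = t' + 1 := le_antisymm h h'
        simp [this]

lemma hitProb_eq (hP1 : ∀ x, ∑ y, P x y = 1) : ∀ t z0, hitProb P s t z0 = surv P s t z0 - surv P s (t + 1) z0 := by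
  intro t
  induction t with
  | zero =>
      intro z0; rw [hitProb_zero, surv_zero, surv_succ]
      split
      · norm_num
      · simp [surv_zero, hP1]
  | succ t ih =>
      intro z0; rw [hitProb_succ, surv_succ, surv_succ]
      split
      · ring
      · rw [← Finset.sum_sub_distrib]
        congr 1; ext u; rw [ih u]; ring

lemma sum_hitProb (hP1 : ∀ x, ∑ y, P x y = 1) (t : ℕ) (z0 : Z) :
    ∑ i ∈ Finset.range t, hitProb P s i z0 = 1 - surv P s t z0 := by
  induction t with
  | zero => simp [surv_zero]
  | succ t ih =>
      rw [Finset.sum_range_succ, ih, hitProb_eq P s hP1]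
      ring

lemma surv_comp (hP0 : ∀ x y, 0 ≤ P x y) (hP1 : ∀ x, ∑ y, P x y = 1) (t : ℕ) (q : ℝ)
    (hq : ∀ u, ∑ u', P u u' * surv P s t u' ≤ q) :
    ∀ b z0, surv P s (b + t + 1) z0 ≤ surv P s (b + 1) z0 * q := by
  intro b
  induction b with
  | zero =>
      intro z0
      rw [Nat.zero_add, surv_succ, surv_succ]
      split
      · simp
      · simp only [surv_zero, mul_one, hP1, one_mul]
        exact hq z0
  | succ b ih =>
      intro z0
      have e1 : b + 1 + t + 1 = (b + t + 1) + 1 := by ring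
      rw [e1, surv_succ, surv_succ]
      split
      · simp
      · rw [Finset.sum_mul]
        refine Finset.sum_le_sum fun u _ => ?_
        rw [mul_assoc]
        exact mul_le_mul_of_nonneg_left (ih u) (hP0 _ _)

lemma surv_le_kpow (hP0 : ∀ x y, 0 ≤ P x y) (hP1 : ∀ x, ∑ y, P x y = 1) :
    ∀ t z0, surv P s (t + 1) z0 ≤ ∑ s', kpow P t z0 s' * (if s' = s then 0 else 1) := by
  intro t
  induction t with
  | zero =>
      intro z0
      rw [surv_succ]
      simp only [kpow_zero, surv_zero, mul_one, ite_mul, one_mul, zero_mul]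
      rw [Finset.sum_ite_eq]
      split
      · simp
      · simp [hP1]
  | succ t ih =>
      intro z0
      rw [surv_succ]
      split
      · exact Finset.sum_nonneg fun s' _ =>
          mul_nonneg (kpow_nonneg_s19 P hP0 _ _ _) (by positivity)
      · calc ∑ u, P z0 u * surv P s (t + 1) u
            ≤ ∑ u, P z0 u * ∑ s', kpow P t u s' * (if s' = s then 0 else 1) :=
              Finset.sum_le_sum fun u _ => mul_le_mul_of_nonneg_left (ih u) (hP0 _ _)
          _ = ∑ u, ∑ s', P z0 u * (kpow P t u s' * (if s' = s then 0 else 1)) := by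
              simp [Finset.mul_sum]
          _ = ∑ s', ∑ u, P z0 u * (kpow P t u s' * (if s' = s then 0 else 1)) :=
              by rw [Finset.sum_comm]
          _ = ∑ s', (∑ u, P z0 u * kpow P t u s') * (if s' = s then 0 else 1) := by
              congr 1; ext s'
              rw [Finset.sum_mul]
              congr 1; ext u; ring
          _ = ∑ s', kpow P (t + 1) z0 s' * (if s' = s then 0 else 1) := by
              simp [kpow_succ]

end aux


section helper
variable {S A : Type*} [Fintype S] [Fintype A] [DecidableEq S] [DecidableEq A]

/-- partial sums of a geometrically dominated series approximate its tsum -/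
lemma geom_partial_bound (γ : ℝ) (hγ0 : 0 < γ) (hγ1 : γ < 1) (f : ℕ → ℝ)
    (hf0 : ∀ j, 0 ≤ f j) (hfle : ∀ j, f j ≤ γ ^ j) (hsum : Summable f) (m : ℕ) :
    0 ≤ (∑' j, f j) - ∑ j ∈ Finset.range m, f j ∧
      (∑' j, f j) - ∑ j ∈ Finset.range m, f j ≤ γ ^ m / (1 - γ) := by
  have hγle : (0:ℝ) ≤ γ := hγ0.le
  have h1γ : (0:ℝ) < 1 - γ := by linarith
  constructor
  · rw [← Summable.sum_add_tsum_nat_add m hsum]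
    have : 0 ≤ ∑' i, f (i + m) := tsum_nonneg fun i => hf0 _
    linarith
  · rw [← Summable.sum_add_tsum_nat_add m hsum]
    have h1 : ∑' i, f (i + m) ≤ ∑' i : ℕ, γ ^ m * γ ^ i := by
      refine Summable.tsum_le_tsum (fun i => ?_) (hsum.comp_injective (add_left_injective m)) ?_
      · calc f (i + m) ≤ γ ^ (i + m) := hfle _
          _ = γ ^ m * γ ^ i := by rw [pow_add]; ring
      · exact (summable_geometric_of_lt_one hγle hγ1).mul_left _
    have h2 : ∑' i : ℕ, γ ^ m * γ ^ i = γ ^ m / (1 - γ) := by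
      rw [tsum_mul_left, tsum_geometric_of_lt_one hγle hγ1]
      ring
    linarith

/-- state marginal of the state-action chain is the `Pst` chain -/
lemma state_marginal (Pk : S → A → S → ℝ) (π : S → A → ℝ)
    (hπ1 : ∀ s, ∑ a, π s a = 1)
    (K : S × A → S × A → ℝ)
    (hK : ∀ z w, K z w = Pk z.1 z.2 w.1 * π w.1 w.2)
    (Pst : S → S → ℝ)
    (hPst : ∀ s s', Pst s s' = ∑ a, π s a * Pk s a s') :
    ∀ t (s1 s2 : S), kpow Pst t s1 s2
      = ∑ a0, π s1 a0 * ∑ a', kpow K t (s1, a0) (s2, a') := by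
  intro t
  induction t with
  | zero =>
      intro s1 s2
      have hinner : ∀ a0 : A, (∑ a', kpow K 0 (s1, a0) (s2, a'))
          = if s1 = s2 then (1:ℝ) else 0 := by
        intro a0
        simp only [kpow_zero, Prod.mk.injEq]
        by_cases h : s1 = s2 <;> simp [h]
      calc kpow Pst 0 s1 s2 = if s1 = s2 then 1 else 0 := kpow_zero _ _ _
        _ = ∑ a0, π s1 a0 * ∑ a', kpow K 0 (s1, a0) (s2, a') := by
            simp only [hinner]
            rw [← Finset.sum_mul, hπ1, one_mul]
  | succ t ih =>
      intro s1 s2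
      rw [kpow_succ]
      have hR : ∀ a0 : A, (∑ a', kpow K (t+1) (s1, a0) (s2, a'))
          = ∑ u, Pk s1 a0 u * kpow Pst t u s2 := by
        intro a0
        simp only [kpow_succ]
        rw [Finset.sum_comm, Fintype.sum_prod_type]
        refine Finset.sum_congr rfl fun u _ => ?_
        rw [ih u s2]
        simp only [hK]
        rw [Finset.mul_sum]
        refine Finset.sum_congr rfl fun b _ => ?_
        rw [Finset.mul_sum, Finset.mul_sum]
        refine Finset.sum_congr rfl fun a' _ => ?_
        ring
      simp only [hR]
      calc ∑ u, Pst s1 u * kpow Pst t u s2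
          = ∑ u, (∑ a0, π s1 a0 * Pk s1 a0 u) * kpow Pst t u s2 := by
            simp only [hPst]
        _ = ∑ u, ∑ a0, π s1 a0 * (Pk s1 a0 u * kpow Pst t u s2) := by
            refine Finset.sum_congr rfl fun u _ => ?_
            rw [Finset.sum_mul]
            refine Finset.sum_congr rfl fun a0 _ => ?_
            ring
        _ = ∑ a0, ∑ u, π s1 a0 * (Pk s1 a0 u * kpow Pst t u s2) := Finset.sum_comm
        _ = ∑ a0, π s1 a0 * ∑ u, Pk s1 a0 u * kpow Pst t u s2 := by
            refine Finset.sum_congr rfl fun a0 _ => ?_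
            rw [Finset.mul_sum]

end helper

section decay
variable {Z : Type*} [Fintype Z] [DecidableEq Z]

/-- geometric decay of the survival function given a uniform one-block bound -/
lemma surv_decay (P : Z → Z → ℝ) (s : Z)
    (hP0 : ∀ x y, 0 ≤ P x y) (hP1 : ∀ x, ∑ y, P x y = 1)
    (tm : ℕ) (htm : 0 < tm) (ν : ℝ) (hν0 : 0 < ν) (hν1 : ν ≤ 1)
    (hqbd : ∀ u, ∑ u', P u u' * surv P s tm u' ≤ 1 - ν / 2) :
    ∀ t (z0 : Z), surv P s t z0 ≤ 2 * (1 - ν / (2 * (tm:ℝ))) ^ t := by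
  have htmR : (1:ℝ) ≤ (tm:ℝ) := by exact_mod_cast htm
  have htmpos : (0:ℝ) < 2 * (tm:ℝ) := by linarith
  set β : ℝ := 1 - ν / (2 * (tm:ℝ)) with hβdef
  have hfrac0 : 0 < ν / (2 * (tm:ℝ)) := div_pos hν0 htmpos
  have hfrac : ν / (2 * (tm:ℝ)) ≤ 1/2 := by
    rw [div_le_iff₀ htmpos]
    nlinarith
  have hβhalf : (1:ℝ)/2 ≤ β := by rw [hβdef]; linarith
  have hβ0 : (0:ℝ) ≤ β := le_trans (by norm_num) hβhalf
  have hβ1 : β < 1 := by rw [hβdef]; linarith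
  have hq0 : (0:ℝ) ≤ 1 - ν/2 := by linarith
  have hqβ : 1 - ν / 2 ≤ β ^ tm := by
    have h := one_add_mul_le_pow (a := -(ν / (2 * (tm:ℝ)))) (by linarith) tm
    have htne : (tm:ℝ) ≠ 0 := by linarith
    have he : (1:ℝ) + (tm:ℝ) * -(ν / (2 * (tm:ℝ))) = 1 - ν / 2 := by
      field_simp
      ring
    rw [he] at h
    have he2 : (1:ℝ) + -(ν / (2 * (tm:ℝ))) = β := by rw [hβdef]; ring
    rwa [he2] at h
  have hβtm : (1:ℝ)/2 ≤ β ^ tm := le_trans (by linarith) hqβ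
  have hsv1 := surv_le_one P s hP0 hP1
  have hsp : ∀ k (z0 : Z), surv P s (k * tm + 1) z0 ≤ (1 - ν/2) ^ k := by
    intro k
    induction k with
    | zero => intro z0; simpa using hsv1 1 z0
    | succ k ih =>
        intro z0
        have he : (k+1) * tm + 1 = k * tm + tm + 1 := by ring
        rw [he]
        calc surv P s (k * tm + tm + 1) z0
            ≤ surv P s (k * tm + 1) z0 * (1 - ν/2) :=
              surv_comp P s hP0 hP1 tm _ hqbd (k * tm) z0
          _ ≤ (1 - ν/2)^k * (1 - ν/2) :=
              mul_le_mul_of_nonneg_right (ih z0) hq0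
          _ = (1 - ν/2)^(k+1) := (pow_succ _ _).symm
  intro t z0
  cases t with
  | zero =>
      have := hsv1 0 z0
      simpa using by linarith
  | succ t' =>
      set k := t' / tm with hk
      have hdm : tm * k + t' % tm = t' := Nat.div_add_mod t' tm
      have hrlt : t' % tm < tm := Nat.mod_lt _ htm
      have hkle : k * tm ≤ t' := by
        rw [Nat.mul_comm]; exact Nat.le.intro hdm
      have h1 : surv P s (t' + 1) z0 ≤ surv P s (k * tm + 1) z0 :=
        surv_anti P s hP0 hP1 (Nat.succ_le_succ hkle) z0
      have h2 : surv P s (k * tm + 1) z0 ≤ (1 - ν/2)^k := hsp k z0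
      have h3 : (1 - ν/2)^k ≤ (β ^ tm)^k := pow_le_pow_left₀ hq0 hqβ k
      have h4 : (β ^ tm)^k = β ^ (tm * k) := by rw [← pow_mul]
      have h5 : β ^ (t' + 1) = β ^ (tm * k) * β ^ (t' % tm + 1) := by
        rw [← pow_add]
        congr 1
        conv_lhs => rw [← hdm]
        exact Nat.add_assoc _ _ _
      have h6 : β ^ tm ≤ β ^ (t' % tm + 1) :=
        pow_le_pow_of_le_one hβ0 hβ1.le (by omega)
      have h7 : (0:ℝ) ≤ β ^ (tm * k) := pow_nonneg hβ0 _
      have hA : surv P s (t' + 1) z0 ≤ β ^ (tm * k) := by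
        rw [← h4]
        exact le_trans h1 (le_trans h2 h3)
      have hB : (1/2) * β ^ (tm * k) ≤ β ^ (t' + 1) := by
        rw [h5]
        calc (1/2) * β ^ (tm * k) = β ^ (tm * k) * (1/2) := by ring
          _ ≤ β ^ (tm * k) * β ^ (t' % tm + 1) :=
              mul_le_mul_of_nonneg_left (le_trans hβtm h6) h7
      linarith

end decay

/-- bias of the single-trajectory VBE-II estimator.  The expectation of
the estimator, computed via the strong Markov property at the truncated first hitting
time of the state `s` (the importance weight `1{a = A_{τ(s)}}/π(a|s)` exactly cancels
the probability of the action at the hitting time), deviates from `Q^π(s,a)` by at most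
`2(n+1)/(1-γ) * (γ^(n-1) + (1 - ν/(2 t_mix))^(n-1))`, uniformly over `(s,a)` and the
initial state. -/
theorem vbe2_bias_bound {S A : Type*} [Fintype S] [Fintype A]
    [DecidableEq S] [DecidableEq A]
    (Pk : S → A → S → ℝ) (c : S → A → ℝ) (π : S → A → ℝ) (γ C ρ ν : ℝ)
    (hP0 : ∀ s a s', 0 ≤ Pk s a s') (hP1 : ∀ s a, ∑ s', Pk s a s' = 1)
    (hπ0 : ∀ s a, 0 ≤ π s a) (hπ1 : ∀ s, ∑ a, π s a = 1)
    (hc0 : ∀ s a, 0 ≤ c s a) (hc1 : ∀ s a, c s a ≤ 1)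
    (hγ0 : 0 < γ) (hγ1 : γ < 1)
    (hC : 0 < C) (hρ0 : 0 < ρ) (hρ1 : ρ < 1) (hν : 0 < ν)
    (K : S × A → S × A → ℝ)
    (hK : ∀ z w, K z w = Pk z.1 z.2 w.1 * π w.1 w.2)
    (Pst : S → S → ℝ)
    (hPst : ∀ s s', Pst s s' = ∑ a, π s a * Pk s a s')
    (σ : S × A → ℝ)
    (hσ0 : ∀ z, 0 ≤ σ z) (hσ1 : ∑ z, σ z = 1)
    (hstat : ∀ z', ∑ z, σ z * K z z' = σ z')
    (hmix : ∀ (t : ℕ) (z0 : S × A), ∑ z', |kpow K t z0 z' - σ z'| ≤ C * ρ ^ t)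
    (hνlb : ∀ s : S, ν ≤ ∑ a, σ (s, a))
    (Qpi : S × A → ℝ)
    (hQ : ∀ z, Qpi z = ∑' t : ℕ, γ ^ t * ∑ w, kpow K t z w * c w.1 w.2)
    (tmix : ℕ) (htmix : tmix = ⌈Real.log (ν / (2 * C)) / Real.log ρ⌉₊)
    (n : ℕ) (hn : 1 ≤ n) :
    ∀ (s : S) (a : A) (s0 : S),
      |(∑ t ∈ Finset.range n, hitProb Pst s t s0 *
          ∑ j ∈ Finset.range (n - t), γ ^ j * ∑ w, kpow K j (s, a) w * c w.1 w.2)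
          - Qpi (s, a)|
        ≤ 2 * (n + 1) / (1 - γ) *
          (γ ^ (n - 1) + (1 - ν / (2 * tmix)) ^ (n - 1)) := by
  intro s a s0
  have hγle : (0:ℝ) ≤ γ := hγ0.le
  have h1γ : (0:ℝ) < 1 - γ := by linarith
  -- kernel facts
  have hK0 : ∀ z w, 0 ≤ K z w := fun z w => by
    rw [hK]; exact mul_nonneg (hP0 _ _ _) (hπ0 _ _)
  have hK1 : ∀ z, ∑ w, K z w = 1 := by
    intro z
    rw [Fintype.sum_prod_type]
    simp only [hK]
    calc ∑ s', ∑ a', Pk z.1 z.2 s' * π s' a'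
        = ∑ s', Pk z.1 z.2 s' * ∑ a', π s' a' := by
          simp [Finset.mul_sum]
      _ = 1 := by simp [hπ1, hP1]
  have hPst0 : ∀ x y, 0 ≤ Pst x y := fun x y => by
    rw [hPst]; exact Finset.sum_nonneg fun a' _ => mul_nonneg (hπ0 _ _) (hP0 _ _ _)
  have hPst1 : ∀ x, ∑ y, Pst x y = 1 := by
    intro x
    simp only [hPst]
    rw [Finset.sum_comm]
    calc ∑ a', ∑ y, π x a' * Pk x a' y
        = ∑ a', π x a' * ∑ y, Pk x a' y := by simp [Finset.mul_sum]
      _ = 1 := by simp [hP1, hπ1]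
  -- state-marginal identity
  have hspow := state_marginal Pk π hπ1 K hK Pst hPst
  -- mixing lower bound on state chain
  have hkPs : ∀ t (s1 : S), ν - C * ρ ^ t ≤ kpow Pst t s1 s := by
    intro t s1
    have hmar : ∀ z0 : S × A, ν - C * ρ ^ t ≤ ∑ a', kpow K t z0 (s, a') := by
      intro z0
      have h1 : ∑ a', |kpow K t z0 (s, a') - σ (s, a')| ≤ C * ρ ^ t := by
        refine le_trans ?_ (hmix t z0)
        rw [Fintype.sum_prod_type]
        exact Finset.single_le_sum
          (f := fun s'' => ∑ a', |kpow K t z0 (s'', a') - σ (s'', a')|)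
          (fun s'' _ => Finset.sum_nonneg fun a' _ => abs_nonneg _) (Finset.mem_univ s)
      have h2 : ∑ a', (σ (s, a') - kpow K t z0 (s, a')) ≤ C * ρ ^ t := by
        refine le_trans (Finset.sum_le_sum fun a' _ => ?_) h1
        calc σ (s, a') - kpow K t z0 (s, a') ≤ |σ (s, a') - kpow K t z0 (s, a')| :=
              le_abs_self _
          _ = |kpow K t z0 (s, a') - σ (s, a')| := abs_sub_comm _ _
      rw [Finset.sum_sub_distrib] at h2
      have h3 := hνlb s
      linarith
    rw [hspow t s1 s]
    calc ν - C * ρ ^ t = ∑ a0, π s1 a0 * (ν - C * ρ ^ t) := by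
          rw [← Finset.sum_mul, hπ1, one_mul]
      _ ≤ ∑ a0, π s1 a0 * ∑ a', kpow K t (s1, a0) (s, a') :=
          Finset.sum_le_sum fun a0 _ => mul_le_mul_of_nonneg_left (hmar _) (hπ0 _ _)
  -- ρ^tmix bound
  have hρtm : C * ρ ^ tmix ≤ ν / 2 := by
    have hlρ : Real.log ρ < 0 := Real.log_neg hρ0 hρ1
    have hx : Real.log (ν / (2 * C)) / Real.log ρ ≤ (tmix : ℝ) := by
      rw [htmix]; exact Nat.le_ceil _
    have hy : (tmix : ℝ) * Real.log ρ ≤ Real.log (ν / (2 * C)) :=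
      (div_le_iff_of_neg hlρ).mp hx
    have hpow : ρ ^ tmix ≤ ν / (2 * C) := by
      have h1 : ρ ^ tmix = Real.exp ((tmix:ℝ) * Real.log ρ) := by
        rw [← Real.log_pow, Real.exp_log (pow_pos hρ0 _)]
      rw [h1, ← Real.exp_log (show (0:ℝ) < ν/(2*C) by positivity)]
      exact Real.exp_le_exp.mpr hy
    calc C * ρ ^ tmix ≤ C * (ν / (2 * C)) := mul_le_mul_of_nonneg_left hpow hC.le
      _ = ν / 2 := by field_simp
  have hν1 : ν ≤ 1 := by
    refine le_trans (hνlb s) ?_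
    rw [← hσ1, Fintype.sum_prod_type]
    exact Finset.single_le_sum
      (fun s'' _ => Finset.sum_nonneg fun a' _ => hσ0 _) (Finset.mem_univ s)
  -- the cost series
  set f : ℕ → ℝ := fun j => γ ^ j * ∑ w, kpow K j (s, a) w * c w.1 w.2 with hfdef
  have hf0 : ∀ j, 0 ≤ f j := fun j =>
    mul_nonneg (pow_nonneg hγle j) (Finset.sum_nonneg fun w _ =>
      mul_nonneg (kpow_nonneg_s19 K hK0 _ _ _) (hc0 _ _))
  have hfle : ∀ j, f j ≤ γ ^ j := by
    intro j
    have : ∑ w, kpow K j (s, a) w * c w.1 w.2 ≤ 1 := by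
      calc ∑ w, kpow K j (s, a) w * c w.1 w.2
          ≤ ∑ w, kpow K j (s, a) w * 1 := Finset.sum_le_sum fun w _ =>
            mul_le_mul_of_nonneg_left (hc1 _ _) (kpow_nonneg_s19 K hK0 _ _ _)
        _ = 1 := by simp [kpow_sum_s19 K hK1]
    calc f j ≤ γ ^ j * 1 := mul_le_mul_of_nonneg_left this (pow_nonneg hγle j)
      _ = γ ^ j := mul_one _
  have hsum : Summable f :=
    Summable.of_nonneg_of_le hf0 hfle (summable_geometric_of_lt_one hγle hγ1)
  have hQeq : Qpi (s, a) = ∑' j, f j := hQ _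
  clear_value f
  have hgp := geom_partial_bound γ hγ0 hγ1 f hf0 hfle hsum
  have htail0 : ∀ m, 0 ≤ Qpi (s, a) - ∑ j ∈ Finset.range m, f j := by
    intro m; rw [hQeq]; exact (hgp m).1
  have htail : ∀ m, Qpi (s, a) - ∑ j ∈ Finset.range m, f j ≤ γ ^ m / (1 - γ) := by
    intro m; rw [hQeq]; exact (hgp m).2
  have hQub : Qpi (s, a) ≤ 1 / (1 - γ) := by
    have h := htail 0
    simpa using h
  have hQ0 : 0 ≤ Qpi (s, a) := by have := htail0 0; simp at this; linarith
  -- hitting probability facts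
  have hh0 : ∀ t, 0 ≤ hitProb Pst s t s0 := by
    intro t
    rw [hitProb_eq Pst s hPst1 t s0]
    have := surv_succ_le Pst s hPst0 hPst1 t s0
    linarith
  have hhle : ∀ t, hitProb Pst s t s0 ≤ surv Pst s t s0 := by
    intro t
    rw [hitProb_eq Pst s hPst1 t s0]
    have := surv_nonneg Pst s hPst0 (t+1) s0
    linarith
  have hsv0 := surv_nonneg Pst s hPst0
  have hsv1 := surv_le_one Pst s hPst0 hPst1
  -- decomposition of the error
  have hEQ : (∑ t ∈ Finset.range n, hitProb Pst s t s0 * ∑ j ∈ Finset.range (n - t), f j)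
        - Qpi (s, a)
      = (∑ t ∈ Finset.range n, hitProb Pst s t s0 *
          ((∑ j ∈ Finset.range (n - t), f j) - Qpi (s, a)))
        - surv Pst s n s0 * Qpi (s, a) := by
    have hsh := sum_hitProb Pst s hPst1 n s0
    simp only [mul_sub]
    rw [Finset.sum_sub_distrib, ← Finset.sum_mul, hsh]
    ring
  rcases Nat.eq_zero_or_pos tmix with htm0 | htm1
  · -- trivial bound when tmix = 0
    subst htm0
    have hE0 : 0 ≤ ∑ t ∈ Finset.range n, hitProb Pst s t s0 * ∑ j ∈ Finset.range (n - t), f j :=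
      Finset.sum_nonneg fun t _ => mul_nonneg (hh0 t)
        (Finset.sum_nonneg fun j _ => hf0 j)
    have hEub : ∑ t ∈ Finset.range n, hitProb Pst s t s0 * ∑ j ∈ Finset.range (n - t), f j
        ≤ Qpi (s, a) := by
      calc ∑ t ∈ Finset.range n, hitProb Pst s t s0 * ∑ j ∈ Finset.range (n - t), f j
          ≤ ∑ t ∈ Finset.range n, hitProb Pst s t s0 * Qpi (s, a) := by
            refine Finset.sum_le_sum fun t _ => mul_le_mul_of_nonneg_left ?_ (hh0 t)
            have := htail0 (n - t); linarith
        _ = (1 - surv Pst s n s0) * Qpi (s, a) := by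
            rw [← Finset.sum_mul, sum_hitProb Pst s hPst1 n s0]
        _ ≤ 1 * Qpi (s, a) := by
            refine mul_le_mul_of_nonneg_right ?_ hQ0
            have := hsv0 n s0; linarith
        _ = Qpi (s, a) := one_mul _
    have habs : |(∑ t ∈ Finset.range n, hitProb Pst s t s0 * ∑ j ∈ Finset.range (n - t), f j)
        - Qpi (s, a)| ≤ 1 / (1 - γ) := by
      rw [abs_le]
      constructor <;> [linarith; linarith]
    refine le_trans habs ?_
    have h1 : (1:ℝ) - ν / (2 * (0:ℕ)) = 1 := by norm_num
    rw [h1, one_pow]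
    have hge : (0:ℝ) ≤ γ ^ (n - 1) := pow_nonneg hγle _
    have hn1 : (1:ℝ) ≤ (n:ℝ) + 1 := by
      have : (0:ℝ) ≤ (n:ℝ) := Nat.cast_nonneg n
      linarith
    have h2 : (1:ℝ) ≤ 2 * ((n:ℝ) + 1) * (γ ^ (n - 1) + 1) := by nlinarith
    calc (1:ℝ) / (1 - γ) ≤ 2 * ((n:ℝ) + 1) * (γ ^ (n - 1) + 1) / (1 - γ) := by
          gcongr
      _ = 2 * ((n:ℝ) + 1) / (1 - γ) * (γ ^ (n - 1) + 1) := by ring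
  · -- main case
    have htmR : (1:ℝ) ≤ (tmix:ℝ) := by exact_mod_cast htm1
    have htmpos : (0:ℝ) < 2 * (tmix:ℝ) := by linarith
    set β : ℝ := 1 - ν / (2 * (tmix:ℝ)) with hβdef
    have hfrac0 : 0 < ν / (2 * (tmix:ℝ)) := div_pos hν htmpos
    have hfrac : ν / (2 * (tmix:ℝ)) ≤ 1/2 := by
      rw [div_le_iff₀ htmpos]
      nlinarith
    have hβhalf : (1:ℝ)/2 ≤ β := by rw [hβdef]; linarith
    have hβ0 : (0:ℝ) ≤ β := le_trans (by norm_num) hβhalf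
    have hβ1 : β < 1 := by rw [hβdef]; linarith
    have hq0 : (0:ℝ) ≤ 1 - ν/2 := by linarith
    have hqβ : 1 - ν / 2 ≤ β ^ tmix := by
      have h := one_add_mul_le_pow (a := -(ν / (2 * (tmix:ℝ)))) (by linarith) tmix
      have htne : (tmix:ℝ) ≠ 0 := by linarith
      have he : (1:ℝ) + (tmix:ℝ) * -(ν / (2 * (tmix:ℝ))) = 1 - ν / 2 := by
        field_simp
        ring
      rw [he] at h
      have he2 : (1:ℝ) + -(ν / (2 * (tmix:ℝ))) = β := by rw [hβdef]; ring
      rwa [he2] at h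
    have hβtm : (1:ℝ)/2 ≤ β ^ tmix := le_trans (by linarith) hqβ
    -- uniform one-block bound
    have hqbd : ∀ u, ∑ u', Pst u u' * surv Pst s tmix u' ≤ 1 - ν / 2 := by
      intro u
      obtain ⟨m, hm⟩ : ∃ m, tmix = m + 1 := ⟨tmix - 1, by omega⟩
      have hks : ν / 2 ≤ kpow Pst tmix u s := by
        have := hkPs tmix u
        linarith [hρtm]
      calc ∑ u', Pst u u' * surv Pst s tmix u'
          ≤ ∑ u', Pst u u' * ∑ s', kpow Pst m u' s' * (if s' = s then 0 else 1) := by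
            refine Finset.sum_le_sum fun u' _ => mul_le_mul_of_nonneg_left ?_ (hPst0 _ _)
            rw [hm]
            exact surv_le_kpow Pst s hPst0 hPst1 m u'
        _ = ∑ s', kpow Pst tmix u s' * (if s' = s then 0 else 1) := by
            rw [hm]
            calc ∑ u', Pst u u' * ∑ s', kpow Pst m u' s' * (if s' = s then 0 else 1)
                = ∑ u', ∑ s', Pst u u' * (kpow Pst m u' s' * (if s' = s then 0 else 1)) := by
                  refine Finset.sum_congr rfl fun u' _ => ?_
                  rw [Finset.mul_sum]
              _ = ∑ s', ∑ u', Pst u u' * (kpow Pst m u' s' * (if s' = s then 0 else 1)) := by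
                  rw [Finset.sum_comm]
              _ = ∑ s', kpow Pst (m+1) u s' * (if s' = s then 0 else 1) := by
                  refine Finset.sum_congr rfl fun s' _ => ?_
                  rw [kpow_succ, Finset.sum_mul]
                  refine Finset.sum_congr rfl fun u' _ => ?_
                  ring
        _ = 1 - kpow Pst tmix u s := by
            have hsplit : ∀ s' : S, kpow Pst tmix u s' * (if s' = s then 0 else 1)
                = kpow Pst tmix u s' - (if s' = s then kpow Pst tmix u s' else 0) := by
              intro s'; split <;> ring
            rw [Finset.sum_congr rfl fun s' _ => hsplit s', Finset.sum_sub_distrib,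
              kpow_sum_s19 Pst hPst1, Finset.sum_ite_eq' Finset.univ s
                (fun s' => kpow Pst tmix u s')]
            simp
        _ ≤ 1 - ν / 2 := by linarith
    have hsurvb : ∀ t (z0 : S), surv Pst s t z0 ≤ 2 * β ^ t := by
      rw [hβdef]
      exact surv_decay Pst s hPst0 hPst1 tmix htm1 ν hν hν1 hqbd
    -- per-term bound
    have hM0 : (0:ℝ) ≤ max γ β := le_trans hγle (le_max_left _ _)
    have hM1 : max γ β ≤ 1 := max_le hγ1.le hβ1.le
    have hMD : (max γ β) ^ (n - 1) ≤ γ ^ (n-1) + β ^ (n-1) := by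
      rcases max_choice γ β with h | h <;> rw [h]
      · linarith [pow_nonneg hβ0 (n-1)]
      · linarith [pow_nonneg hγle (n-1)]
    have hterm : ∀ t ∈ Finset.range n, hitProb Pst s t s0 * γ ^ (n - t)
        ≤ 2 * (γ ^ (n-1) + β ^ (n-1)) := by
      intro t ht
      rw [Finset.mem_range] at ht
      have h1 : hitProb Pst s t s0 ≤ 2 * β ^ t := le_trans (hhle t) (hsurvb t s0)
      have h2 : hitProb Pst s t s0 * γ ^ (n-t) ≤ 2 * β ^ t * γ ^ (n-t) :=
        mul_le_mul_of_nonneg_right h1 (pow_nonneg hγle _)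
      have h3 : β ^ t * γ ^ (n-t) ≤ (max γ β) ^ t * (max γ β) ^ (n-t) :=
        mul_le_mul (pow_le_pow_left₀ hβ0 (le_max_right _ _) t)
          (pow_le_pow_left₀ hγle (le_max_left _ _) _) (pow_nonneg hγle _) (pow_nonneg hM0 _)
      have h4 : (max γ β) ^ t * (max γ β) ^ (n-t) = (max γ β) ^ n := by
        rw [← pow_add]; congr 1; omega
      have h5 : (max γ β) ^ n ≤ (max γ β) ^ (n-1) :=
        pow_le_pow_of_le_one hM0 hM1 (by omega)
      calc hitProb Pst s t s0 * γ ^ (n - t) ≤ 2 * β ^ t * γ ^ (n-t) := h2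
        _ = 2 * (β ^ t * γ ^ (n-t)) := by ring
        _ ≤ 2 * ((max γ β) ^ t * (max γ β) ^ (n-t)) := by linarith
        _ = 2 * (max γ β) ^ n := by rw [h4]
        _ ≤ 2 * (max γ β) ^ (n-1) := by linarith
        _ ≤ 2 * (γ ^ (n-1) + β ^ (n-1)) := by linarith
    have hlast : surv Pst s n s0 * Qpi (s, a)
        ≤ 2 * (γ ^ (n-1) + β ^ (n-1)) * (1 / (1-γ)) := by
      have h1 : surv Pst s n s0 ≤ 2 * β ^ n := hsurvb n s0
      have h2 : β ^ n ≤ β ^ (n-1) := pow_le_pow_of_le_one hβ0 hβ1.le (by omega)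
      have h3 : surv Pst s n s0 ≤ 2 * (γ ^ (n-1) + β ^ (n-1)) := by
        linarith [pow_nonneg hγle (n-1)]
      exact mul_le_mul h3 hQub hQ0 (by positivity)
    -- assemble
    clear_value β
    clear hqbd hspow hkPs hmix hstat hσ0 hσ1 hνlb hQ hK hK0 hK1 hPst hqβ hβtm
    rw [hEQ]
    calc |(∑ t ∈ Finset.range n, hitProb Pst s t s0 *
            ((∑ j ∈ Finset.range (n - t), f j) - Qpi (s, a)))
          - surv Pst s n s0 * Qpi (s, a)|
        ≤ |∑ t ∈ Finset.range n, hitProb Pst s t s0 *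
            ((∑ j ∈ Finset.range (n - t), f j) - Qpi (s, a))|
          + |surv Pst s n s0 * Qpi (s, a)| := abs_sub _ _
      _ ≤ (∑ t ∈ Finset.range n, |hitProb Pst s t s0 *
            ((∑ j ∈ Finset.range (n - t), f j) - Qpi (s, a))|)
          + surv Pst s n s0 * Qpi (s, a) := by
          have := Finset.abs_sum_le_sum_abs
            (fun t => hitProb Pst s t s0 * ((∑ j ∈ Finset.range (n - t), f j) - Qpi (s, a)))
            (Finset.range n)
          have h2 : |surv Pst s n s0 * Qpi (s, a)| = surv Pst s n s0 * Qpi (s, a) :=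
            abs_of_nonneg (mul_nonneg (hsv0 n s0) hQ0)
          linarith
      _ ≤ (∑ t ∈ Finset.range n, 2 * (γ ^ (n-1) + β ^ (n-1)) * (1/(1-γ)))
          + 2 * (γ ^ (n-1) + β ^ (n-1)) * (1/(1-γ)) := by
          refine add_le_add (Finset.sum_le_sum fun t ht => ?_) hlast
          have habs : |hitProb Pst s t s0 * ((∑ j ∈ Finset.range (n - t), f j) - Qpi (s, a))|
              = hitProb Pst s t s0 * (Qpi (s, a) - ∑ j ∈ Finset.range (n - t), f j) := by
            rw [abs_mul, abs_of_nonneg (hh0 t),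
              abs_of_nonpos (by linarith [htail0 (n - t)])]
            ring
          rw [habs]
          calc hitProb Pst s t s0 * (Qpi (s, a) - ∑ j ∈ Finset.range (n - t), f j)
              ≤ hitProb Pst s t s0 * (γ ^ (n - t) / (1 - γ)) :=
                mul_le_mul_of_nonneg_left (htail (n - t)) (hh0 t)
            _ = (hitProb Pst s t s0 * γ ^ (n - t)) * (1/(1-γ)) := by ring
            _ ≤ 2 * (γ ^ (n-1) + β ^ (n-1)) * (1/(1-γ)) :=
                mul_le_mul_of_nonneg_right (hterm t ht) (by positivity)
      _ = (n:ℝ) * (2 * (γ ^ (n-1) + β ^ (n-1)) * (1/(1-γ)))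
          + 2 * (γ ^ (n-1) + β ^ (n-1)) * (1/(1-γ)) := by
          rw [Finset.sum_const, Finset.card_range, nsmul_eq_mul]
      _ = 2 * ((n:ℝ) + 1) / (1 - γ) * (γ ^ (n - 1) + β ^ (n - 1)) := by
          rw [one_div, div_eq_mul_inv]
          ring
end
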